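/- arXiv:1012.4269 — 3 statements merged into one kernel-verified Lean document; each statement's English description precedes it below -/
import Mathlib

section
/- Let r and s be coprime integers with 2 ≤ r < s, let f be holomorphic on a punctured disc {τ ∈ ℂ : 0 < |τ| < ρ}, and let (a_m)_{m∈ℤ} be the Laurent coefficients of f. Then the following are equivalent: (a) for every function G holomorphic on some open neighborhood of 0 in ℂ² and all sufficiently small ε > 0, ∮_{|τ|=ε} f(τ) G(τ^s, τ^r) τ^{-(r-1)(s-1)} dτ = 0; (b) a_m = 0 for every integer m not belonging to S(r,s) = {αs + βr : α, β ∈ ℕ}. -/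
open MeasureTheory Complex

section Stmt2Auxiliary
open Metric


/-- The Frobenius number `rs - r - s` is not in the semigroup. -/
lemma frob_not_mem (r s : ℕ) (hr : 2 ≤ r) (hrs : r < s) (hcop : Nat.Coprime r s) :
    ¬ ∃ a b : ℕ, (r : ℤ) * s - r - s = (a : ℤ) * s + (b : ℤ) * r := by
  rintro ⟨a, b, hab⟩
  have hco : IsCoprime (r : ℤ) (s : ℤ) := Nat.isCoprime_iff_coprime.2 hcop
  have hdvd : (r : ℤ) ∣ ((a : ℤ) + 1) * s := by
    have : ((a : ℤ) + 1) * s = (r : ℤ) * s - ((b : ℤ) + 1) * r := by linarith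
    rw [this]
    exact dvd_sub ⟨s, rfl⟩ ⟨b + 1, by ring⟩
  have hdvd2 : (r : ℤ) ∣ ((a : ℤ) + 1) := hco.dvd_of_dvd_mul_right hdvd
  have hle : (r : ℤ) ≤ (a : ℤ) + 1 := Int.le_of_dvd (by positivity) hdvd2
  have hs0 : (0 : ℤ) < s := by exact_mod_cast lt_of_le_of_lt (by norm_num) (lt_of_le_of_lt hr hrs)
  have hr0 : (0 : ℤ) < r := by exact_mod_cast lt_of_lt_of_le (by norm_num) hr
  nlinarith [mul_le_mul_of_nonneg_right hle hs0.le]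

/-- If `n` is in the semigroup then the Frobenius symmetric point is not. -/
lemma mem_imp_sym_not_mem (r s : ℕ) (hr : 2 ≤ r) (hrs : r < s) (hcop : Nat.Coprime r s)
    {n : ℤ} (hn : ∃ a b : ℕ, n = (a : ℤ) * s + (b : ℤ) * r) :
    ¬ ∃ a b : ℕ, (r : ℤ) * s - r - s - n = (a : ℤ) * s + (b : ℤ) * r := by
  rintro ⟨a, b, hab⟩
  obtain ⟨a', b', hab'⟩ := hn
  exact frob_not_mem r s hr hrs hcop ⟨a + a', b + b', by push_cast; linarith⟩

/-- If `m` is not in the semigroup then the Frobenius symmetric point is. -/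
lemma not_mem_imp_sym_mem (r s : ℕ) (hr : 2 ≤ r) (hrs : r < s) (hcop : Nat.Coprime r s)
    {m : ℤ} (hm : ¬ ∃ a b : ℕ, m = (a : ℤ) * s + (b : ℤ) * r) :
    ∃ a b : ℕ, (r : ℤ) * s - r - s - m = (a : ℤ) * s + (b : ℤ) * r := by
  have hco : IsCoprime (r : ℤ) (s : ℤ) := Nat.isCoprime_iff_coprime.2 hcop
  obtain ⟨u, v, huv⟩ := hco
  have hr0 : (0 : ℤ) < r := by exact_mod_cast lt_of_lt_of_le (by norm_num) hr
  set α : ℤ := (v * m) % r with hα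
  have hα0 : 0 ≤ α := Int.emod_nonneg _ hr0.ne'
  have hαr : α < r := Int.emod_lt_of_pos _ hr0
  set k : ℤ := (v * m) / r with hk
  have hvk : v * m = r * k + α := (Int.mul_ediv_add_emod (v * m) r).symm
  set β : ℤ := m * u + k * s with hβ
  have hrep : m = α * s + β * r := by
    have : α = v * m - r * k := by rw [hvk]; ring
    rw [this, hβ]
    have : (v * m - r * k) * s + (m * u + k * s) * r = m * (u * r + v * s) := by ring
    rw [this, huv, mul_one]
  have hβneg : β < 0 := by
    by_contra hge
    push_neg at hge
    exact hm ⟨α.toNat, β.toNat, by rw [Int.toNat_of_nonneg hα0, Int.toNat_of_nonneg hge]; exact hrep⟩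
  refine ⟨(r - 1 - α).toNat, (-1 - β).toNat, ?_⟩
  rw [Int.toNat_of_nonneg (by omega), Int.toNat_of_nonneg (by omega)]
  rw [hrep]; ring



lemma ofReal_mem_sphere' {ε : ℝ} (hε : 0 < ε) : (ε : ℂ) ∈ sphere (0 : ℂ) ε := by
  rw [mem_sphere_zero_iff_norm, Complex.norm_real, Real.norm_eq_abs, abs_of_pos hε]

/-- Interchange of summation and circle integration, with uniform bounds. -/
lemma hasSum_circleIntegral {ι : Type*} [Countable ι] {ε : ℝ} (hε : 0 < ε)
    (F : ι → ℂ → ℂ) (Φ : ℂ → ℂ) (b : ι → ℝ)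
    (hmeas : ∀ i, AEStronglyMeasurable (fun θ : ℝ => F i (circleMap 0 ε θ))
      (volume.restrict (Set.Ioc 0 (2 * Real.pi))))
    (hb : ∀ i, ∀ τ ∈ sphere (0:ℂ) ε, ‖F i τ‖ ≤ b i)
    (hsum : Summable b)
    (hpt : ∀ τ ∈ sphere (0:ℂ) ε, HasSum (fun i => F i τ) (Φ τ)) :
    HasSum (fun i => ∮ τ in C(0, ε), F i τ) (∮ τ in C(0, ε), Φ τ) := by
  have hb0 : ∀ i, 0 ≤ b i := fun i =>
    le_trans (norm_nonneg _) (hb i _ (ofReal_mem_sphere' hε))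
  have h2π : (0:ℝ) ≤ 2 * Real.pi := Real.two_pi_pos.le
  have hnorm : ∀ i, ‖∮ τ in C(0, ε), F i τ‖ ≤ 2 * Real.pi * ε * b i := fun i =>
    circleIntegral.norm_integral_le_of_norm_le_const hε.le (hb i)
  have hsummable : Summable (fun i => ∮ τ in C(0, ε), F i τ) :=
    Summable.of_norm_bounded (hsum.mul_left (2 * Real.pi * ε)) hnorm
  rw [hsummable.hasSum_iff]
  have hgmeas : ∀ i, AEStronglyMeasurable
      (fun θ : ℝ => deriv (circleMap 0 ε) θ • F i (circleMap 0 ε θ))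
      (volume.restrict (Set.Ioc 0 (2 * Real.pi))) := by
    intro i
    have hc : Continuous (fun θ : ℝ => deriv (circleMap 0 ε) θ) := by
      simp only [deriv_circleMap]
      exact (continuous_circleMap 0 ε).mul continuous_const
    exact (hc.aestronglyMeasurable).smul (hmeas i)
  have hgbound : ∀ (i) (θ : ℝ), ‖deriv (circleMap 0 ε) θ • F i (circleMap 0 ε θ)‖ ≤ ε * b i := by
    intro i θ
    have h1 : ‖deriv (circleMap 0 ε) θ‖ = ε := by
      rw [deriv_circleMap, norm_mul,
        norm_circleMap_zero, Complex.norm_I, mul_one, abs_of_pos hε]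
    rw [smul_eq_mul, norm_mul, h1]
    exact mul_le_mul_of_nonneg_left (hb i _ (circleMap_mem_sphere 0 hε.le θ)) hε.le
  have hlint : ∑' i, ∫⁻ θ, ‖deriv (circleMap 0 ε) θ • F i (circleMap 0 ε θ)‖₊
      ∂(volume.restrict (Set.Ioc 0 (2 * Real.pi))) ≠ ⊤ := by
    have hbd : ∀ i, ∫⁻ θ, ‖deriv (circleMap 0 ε) θ • F i (circleMap 0 ε θ)‖₊
        ∂(volume.restrict (Set.Ioc 0 (2 * Real.pi)))
        ≤ ENNReal.ofReal (ε * b i) * ENNReal.ofReal (2 * Real.pi) := by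
      intro i
      calc ∫⁻ θ, ‖deriv (circleMap 0 ε) θ • F i (circleMap 0 ε θ)‖₊
            ∂(volume.restrict (Set.Ioc 0 (2 * Real.pi)))
          ≤ ∫⁻ _, ENNReal.ofReal (ε * b i) ∂(volume.restrict (Set.Ioc 0 (2 * Real.pi))) := by
            refine lintegral_mono fun θ => ?_
            rw [← enorm_eq_nnnorm, ← ofReal_norm]
            exact ENNReal.ofReal_le_ofReal (hgbound i θ)
        _ = ENNReal.ofReal (ε * b i) * ENNReal.ofReal (2 * Real.pi) := by
            rw [lintegral_const, Measure.restrict_apply_univ, Real.volume_Ioc]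
            norm_num
    refine ne_top_of_le_ne_top ?_ (ENNReal.tsum_le_tsum hbd)
    rw [ENNReal.tsum_mul_right]
    refine ENNReal.mul_ne_top ?_ ENNReal.ofReal_ne_top
    rw [← ENNReal.ofReal_tsum_of_nonneg (fun i => mul_nonneg hε.le (hb0 i))
      (hsum.mul_left ε)]
    exact ENNReal.ofReal_ne_top
  have key := integral_tsum hgmeas hlint
  have hci : ∀ (h : ℂ → ℂ), (∮ τ in C(0, ε), h τ)
      = ∫ θ in Set.Ioc (0:ℝ) (2 * Real.pi),
          deriv (circleMap 0 ε) θ • h (circleMap 0 ε θ) ∂volume := by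
    intro h
    rw [circleIntegral, intervalIntegral.integral_of_le h2π]
  rw [hci Φ]
  have hptg : ∀ θ : ℝ, HasSum (fun i => deriv (circleMap 0 ε) θ • F i (circleMap 0 ε θ))
      (deriv (circleMap 0 ε) θ • Φ (circleMap 0 ε θ)) := fun θ =>
    (hpt _ (circleMap_mem_sphere 0 hε.le θ)).const_smul _
  have heq : (fun θ => deriv (circleMap 0 ε) θ • Φ (circleMap 0 ε θ))
      = fun θ => ∑' i, deriv (circleMap 0 ε) θ • F i (circleMap 0 ε θ) :=
    funext fun θ => ((hptg θ).tsum_eq).symm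
  rw [heq, key]
  exact tsum_congr fun i => hci (F i)

/-- Geometric series for `(w - x)⁻¹`. -/
lemma hasSum_geom {x w : ℂ} (h : ‖x‖ < ‖w‖) :
    HasSum (fun k : ℕ => x ^ k * w ^ (-(k:ℤ)-1)) ((w - x)⁻¹) := by
  have hw0 : 0 < ‖w‖ := lt_of_le_of_lt (norm_nonneg x) h
  have hw : w ≠ 0 := by
    intro h0; rw [h0] at hw0; simp at hw0
  have hxw : ‖x / w‖ < 1 := by
    rw [norm_div, div_lt_one hw0]; exact h
  have h2 := (hasSum_geometric_of_norm_lt_one hxw).mul_right w⁻¹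
  have hval : (1 - x / w)⁻¹ * w⁻¹ = (w - x)⁻¹ := by
    rw [← mul_inv]
    congr 1
    field_simp
  rw [hval] at h2
  have heq : (fun k : ℕ => (x / w) ^ k * w⁻¹) = fun k : ℕ => x ^ k * w ^ (-(k:ℤ)-1) := by
    funext k
    have : (-(k:ℤ)-1) = -((k+1 : ℕ) : ℤ) := by push_cast; ring
    rw [this, zpow_neg, zpow_natCast, div_pow, pow_succ, mul_inv]
    field_simp
  rwa [heq] at h2

lemma norm_zpow_negSucc (z : ℂ) (k : ℕ) : ‖z ^ (-(k:ℤ)-1)‖ = (‖z‖ ^ (k+1))⁻¹ := by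
  have h : (-(k:ℤ)-1) = -((k+1 : ℕ) : ℤ) := by push_cast; ring
  rw [h, zpow_neg, norm_inv, zpow_natCast, norm_pow]

lemma hasSum_mul_norm {ι κ : Type*} {f : ι → ℂ} {g : κ → ℂ} {a b : ℂ}
    (hf : HasSum f a) (hg : HasSum g b)
    (hfn : Summable fun i => ‖f i‖) (hgn : Summable fun j => ‖g j‖) :
    HasSum (fun p : ι × κ => f p.1 * g p.2) (a * b) := by
  have hs := summable_mul_of_summable_norm hfn hgn
  rw [hs.hasSum_iff, ← tsum_mul_tsum_of_summable_norm hfn hgn, hf.tsum_eq, hg.tsum_eq]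
lemma circleIntegral_const_mul (a : ℂ) (f : ℂ → ℂ) (c : ℂ) (R : ℝ) :
    (∮ z in C(c,R), a * f z) = a * ∮ z in C(c,R), f z := by
  simpa [smul_eq_mul] using circleIntegral.integral_smul a f c R

set_option maxHeartbeats 1000000 in
/-- Two-variable monomial expansion of `G(τ^s, τ^r)` for `G` holomorphic near `0 ∈ ℂ²`. -/
lemma expansion (r s : ℕ) (hr : 0 < r) (hs : 0 < s) (G : ℂ × ℂ → ℂ)
    (V : Set (ℂ × ℂ)) (hV : IsOpen V) (h0 : (0:ℂ × ℂ) ∈ V) (hG : DifferentiableOn ℂ G V) :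
    ∃ ε₁ : ℝ, 0 < ε₁ ∧ ε₁ ≤ 1 ∧ ∃ B : ℕ × ℕ → ℂ,
      (∀ t : ℝ, 0 < t → t < ε₁ → Summable (fun p : ℕ × ℕ => ‖B p‖ * t ^ (s * p.1 + r * p.2))) ∧
      (∀ τ : ℂ, ‖τ‖ < ε₁ →
        HasSum (fun p : ℕ × ℕ => B p * τ ^ (s * p.1 + r * p.2)) (G (τ ^ s, τ ^ r))) := by
  classical
  -- a closed bidisc inside V
  obtain ⟨δ', hδ', hball⟩ := Metric.isOpen_iff.1 hV 0 h0
  obtain ⟨δ, hδ, hδlt⟩ : ∃ δ : ℝ, 0 < δ ∧ δ < δ' := ⟨δ' / 2, by positivity, by linarith⟩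
  have hδ0 : δ ≠ 0 := hδ.ne'
  have hK : closedBall (0:ℂ) δ ×ˢ closedBall (0:ℂ) δ ⊆ V := by
    intro p hp
    apply hball
    rw [mem_ball, Prod.dist_eq]
    rcases hp with ⟨h1, h2⟩
    exact lt_of_le_of_lt (max_le (mem_closedBall.1 h1) (mem_closedBall.1 h2)) hδlt
  -- bound for G on the bidisc
  obtain ⟨M, hM⟩ := ((isCompact_closedBall (0:ℂ) δ).prod
    (isCompact_closedBall (0:ℂ) δ)).exists_bound_of_continuousOn (hG.continuousOn.mono hK)
  have h0K : (0 : ℂ × ℂ) ∈ closedBall (0:ℂ) δ ×ˢ closedBall (0:ℂ) δ :=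
    ⟨mem_closedBall_self hδ.le, mem_closedBall_self hδ.le⟩
  have hM0 : 0 ≤ M := le_trans (norm_nonneg _) (hM 0 h0K)
  have hGK : ∀ {w z : ℂ}, w ∈ closedBall (0:ℂ) δ → z ∈ closedBall (0:ℂ) δ → ‖G (w, z)‖ ≤ M :=
    fun hw hz => hM _ ⟨hw, hz⟩
  -- inner coefficients
  obtain ⟨qI, hqIdef⟩ : ∃ q : ℕ → ℂ → ℂ,
      q = fun (β : ℕ) (w : ℂ) => ∮ z in C(0, δ), G (w, z) * z ^ (-(β:ℤ)-1) :=
    ⟨fun (β : ℕ) (w : ℂ) => ∮ z in C(0, δ), G (w, z) * z ^ (-(β:ℤ)-1), rfl⟩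
  have hqb : ∀ (β : ℕ), ∀ w ∈ closedBall (0:ℂ) δ, ‖qI β w‖ ≤ 2 * Real.pi * M / δ ^ β := by
    intro β w hw
    have key : ‖qI β w‖ ≤ 2 * Real.pi * δ * (M * (δ ^ (β+1))⁻¹) := by
      rw [hqIdef]
      refine circleIntegral.norm_integral_le_of_norm_le_const hδ.le ?_
      intro z hz
      have hzn : ‖z‖ = δ := mem_sphere_zero_iff_norm.1 hz
      rw [norm_mul, norm_zpow_negSucc, hzn]
      exact mul_le_mul_of_nonneg_right (hGK hw (sphere_subset_closedBall hz)) (by positivity)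
    calc ‖qI β w‖ ≤ 2 * Real.pi * δ * (M * (δ ^ (β+1))⁻¹) := key
      _ = 2 * Real.pi * M / δ ^ β := by
          rw [pow_succ, mul_inv, div_eq_mul_inv]; field_simp
  -- measurability of qI along circles
  have hqmeas : ∀ β : ℕ, AEStronglyMeasurable (fun θ : ℝ => qI β (circleMap 0 δ θ))
      (volume.restrict (Set.Ioc 0 (2 * Real.pi))) := by
    intro β
    have hrw : (fun θ : ℝ => qI β (circleMap 0 δ θ))
        = fun θ : ℝ => ∫ θ' in Set.Ioc (0:ℝ) (2 * Real.pi),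
            (fun q : ℝ × ℝ => deriv (circleMap 0 δ) q.2 •
              (G (circleMap 0 δ q.1, circleMap 0 δ q.2) *
                (circleMap 0 δ q.2) ^ (-(β:ℤ)-1))) (θ, θ') ∂volume := by
      funext θ
      rw [hqIdef]
      simp only
      rw [circleIntegral, intervalIntegral.integral_of_le Real.two_pi_pos.le]
    rw [hrw]
    have hcont : Continuous (fun q : ℝ × ℝ => deriv (circleMap 0 δ) q.2 •
        (G (circleMap 0 δ q.1, circleMap 0 δ q.2) * (circleMap 0 δ q.2) ^ (-(β:ℤ)-1))) := by
      have hder : Continuous (fun q : ℝ × ℝ => deriv (circleMap 0 δ) q.2) := by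
        simp only [deriv_circleMap]
        exact ((continuous_circleMap 0 δ).comp continuous_snd).mul continuous_const
      have hGc : Continuous (fun q : ℝ × ℝ => G (circleMap 0 δ q.1, circleMap 0 δ q.2)) := by
        refine (hG.continuousOn).comp_continuous
          (((continuous_circleMap 0 δ).comp continuous_fst).prodMk
            ((continuous_circleMap 0 δ).comp continuous_snd)) fun q => hK ?_
        exact ⟨sphere_subset_closedBall (circleMap_mem_sphere 0 hδ.le _),
          sphere_subset_closedBall (circleMap_mem_sphere 0 hδ.le _)⟩
      have hzp : Continuous (fun q : ℝ × ℝ => (circleMap 0 δ q.2) ^ (-(β:ℤ)-1)) :=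
        Continuous.zpow₀ ((continuous_circleMap 0 δ).comp continuous_snd) _
          (fun q => Or.inl (circleMap_ne_center hδ0))
      exact hder.smul (hGc.mul hzp)
    exact (hcont.stronglyMeasurable.integral_prod_right').aestronglyMeasurable
  -- the normalizing constant
  have hc0 : (2 * (Real.pi:ℂ) * I) * (2 * (Real.pi:ℂ) * I) ≠ 0 := by
    apply mul_ne_zero <;>
    · apply mul_ne_zero
      · simp [Complex.ext_iff, Real.pi_ne_zero]
      · exact I_ne_zero
  obtain ⟨c, hcdef⟩ : ∃ c : ℂ, c = (2 * (Real.pi:ℂ) * I) * (2 * (Real.pi:ℂ) * I) := ⟨_, rfl⟩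
  rw [← hcdef] at hc0
  obtain ⟨B, hBdef⟩ : ∃ B : ℕ × ℕ → ℂ,
      B = fun p : ℕ × ℕ => c⁻¹ * ∮ w in C(0, δ), qI p.2 w * w ^ (-(p.1:ℤ)-1) :=
    ⟨fun p : ℕ × ℕ => c⁻¹ * ∮ w in C(0, δ), qI p.2 w * w ^ (-(p.1:ℤ)-1), rfl⟩
  have hBb : ∀ p : ℕ × ℕ, ‖B p‖ ≤ M / δ ^ p.1 / δ ^ p.2 := by
    intro p
    have hci : ‖∮ w in C(0, δ), qI p.2 w * w ^ (-(p.1:ℤ)-1)‖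
        ≤ 2 * Real.pi * δ * (2 * Real.pi * M / δ ^ p.2 * (δ ^ (p.1+1))⁻¹) := by
      refine circleIntegral.norm_integral_le_of_norm_le_const hδ.le ?_
      intro w hw
      have hwn : ‖w‖ = δ := mem_sphere_zero_iff_norm.1 hw
      rw [norm_mul, norm_zpow_negSucc, hwn]
      exact mul_le_mul_of_nonneg_right (hqb p.2 w (sphere_subset_closedBall hw)) (by positivity)
    have hcn : ‖c⁻¹‖ = ((2 * Real.pi) * (2 * Real.pi))⁻¹ := by
      rw [norm_inv, hcdef, norm_mul, norm_mul, norm_mul]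
      simp [abs_of_pos Real.pi_pos]
    rw [hBdef]
    simp only
    rw [norm_mul, hcn]
    calc ((2 * Real.pi) * (2 * Real.pi))⁻¹ * ‖∮ w in C(0, δ), qI p.2 w * w ^ (-(p.1:ℤ)-1)‖
        ≤ ((2 * Real.pi) * (2 * Real.pi))⁻¹ *
          (2 * Real.pi * δ * (2 * Real.pi * M / δ ^ p.2 * (δ ^ (p.1+1))⁻¹)) :=
          mul_le_mul_of_nonneg_left hci (by positivity)
      _ = M / δ ^ p.1 / δ ^ p.2 := by
          rw [pow_succ]; field_simp
  refine ⟨min δ 1, lt_min hδ one_pos, min_le_right _ _, B, ?_, ?_⟩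
  · -- summability of the coefficient bounds
    intro t ht htlt
    have ht1 : t < 1 := lt_of_lt_of_le htlt (min_le_right _ _)
    have htδ : t < δ := lt_of_lt_of_le htlt (min_le_left _ _)
    have hts : t ^ s < δ := lt_of_le_of_lt
      (by calc t ^ s ≤ t ^ 1 := pow_le_pow_of_le_one ht.le ht1.le hs
            _ = t := pow_one t) htδ
    have htr : t ^ r < δ := lt_of_le_of_lt
      (by calc t ^ r ≤ t ^ 1 := pow_le_pow_of_le_one ht.le ht1.le hr
            _ = t := pow_one t) htδ
    have hmaj : Summable (fun p : ℕ × ℕ => (M * (t ^ s / δ) ^ p.1) * ((t ^ r / δ) ^ p.2)) := by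
      refine Summable.mul_of_nonneg (f := fun α : ℕ => M * (t ^ s / δ) ^ α)
        (g := fun β : ℕ => (t ^ r / δ) ^ β) ?_ ?_
        (fun α => by positivity) (fun β => by positivity)
      · exact (summable_geometric_of_lt_one (by positivity)
          (by rw [div_lt_one hδ]; exact hts)).mul_left M
      · exact summable_geometric_of_lt_one (by positivity) (by rw [div_lt_one hδ]; exact htr)
    refine Summable.of_nonneg_of_le (fun p => by positivity) (fun p => ?_) hmaj
    calc ‖B p‖ * t ^ (s * p.1 + r * p.2)
        ≤ (M / δ ^ p.1 / δ ^ p.2) * t ^ (s * p.1 + r * p.2) :=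
          mul_le_mul_of_nonneg_right (hBb p) (by positivity)
      _ = (M * (t ^ s / δ) ^ p.1) * ((t ^ r / δ) ^ p.2) := by
          rw [pow_add, pow_mul, pow_mul, div_pow, div_pow, div_eq_mul_inv, div_eq_mul_inv,
            div_eq_mul_inv, div_eq_mul_inv]
          ring
  · -- the expansion
    intro τ hτ
    have hτδ : ‖τ‖ < δ := lt_of_lt_of_le hτ (min_le_left _ _)
    have hτ1 : ‖τ‖ < 1 := lt_of_lt_of_le hτ (min_le_right _ _)
    have habs0 : 0 ≤ ‖τ‖ := norm_nonneg τ
    have hτs : ‖τ ^ s‖ < δ := by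
      rw [norm_pow]
      calc ‖τ‖ ^ s ≤ ‖τ‖ ^ 1 := pow_le_pow_of_le_one habs0 hτ1.le hs
        _ = ‖τ‖ := pow_one _
        _ < δ := hτδ
    have hτr : ‖τ ^ r‖ < δ := by
      rw [norm_pow]
      calc ‖τ‖ ^ r ≤ ‖τ‖ ^ 1 := pow_le_pow_of_le_one habs0 hτ1.le hr
        _ = ‖τ‖ := pow_one _
        _ < δ := hτδ
    have hτs2 : ‖τ‖ ^ s < δ := by rw [← norm_pow]; exact hτs
    have hτr2 : ‖τ‖ ^ r < δ := by rw [← norm_pow]; exact hτr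
    have hτrc : τ ^ r ∈ closedBall (0:ℂ) δ := by
      rw [mem_closedBall_zero_iff]; exact hτr.le
    -- Step A : inner expansion on the w-sphere
    have stepA : ∀ w ∈ sphere (0:ℂ) δ,
        HasSum (fun β : ℕ => (τ^r)^β * qI β w) ((2 * Real.pi * I) * G (w, τ^r)) := by
      intro w hw
      have hwc : w ∈ closedBall (0:ℂ) δ := sphere_subset_closedBall hw
      have h2w : DifferentiableOn ℂ (fun v : ℂ => G (w, v)) (closedBall 0 δ) := by
        have : DifferentiableOn ℂ (G ∘ (fun v : ℂ => (w, v))) (closedBall 0 δ) := by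
          refine hG.comp ((differentiableOn_const w).prodMk differentiableOn_id) ?_
          intro v hv
          exact hK ⟨hwc, hv⟩
        exact this
      have cauchy2 : (∮ z in C(0, δ), (z - τ^r)⁻¹ * G (w, z))
          = (2 * Real.pi * I) * G (w, τ^r) := by
        have := h2w.circleIntegral_sub_inv_smul
          (w := τ^r) (by rw [mem_ball_zero_iff]; exact hτr)
        simpa [smul_eq_mul] using this
      have hint := hasSum_circleIntegral (ι := ℕ) hδ
        (fun β z => (τ^r)^β * (G (w, z) * z ^ (-(β:ℤ)-1)))
        (fun z => (z - τ^r)⁻¹ * G (w, z))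
        (fun β => (‖τ‖ ^ r) ^ β * (M * (δ ^ (β+1))⁻¹))
        (fun β => by
          refine Continuous.aestronglyMeasurable ?_
          refine Continuous.mul continuous_const ?_
          refine Continuous.mul ?_ ?_
          · refine (hG.continuousOn).comp_continuous
              (continuous_const.prodMk (continuous_circleMap 0 δ)) fun θ => hK ?_
            exact ⟨hwc, sphere_subset_closedBall (circleMap_mem_sphere 0 hδ.le _)⟩
          · exact Continuous.zpow₀ (continuous_circleMap 0 δ) _
              (fun θ => Or.inl (circleMap_ne_center hδ0)))
        (fun β z hz => by
          have hzn : ‖z‖ = δ := mem_sphere_zero_iff_norm.1 hz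
          simp only [norm_mul, norm_pow, norm_zpow_negSucc, hzn]
          exact mul_le_mul_of_nonneg_left (mul_le_mul_of_nonneg_right
            (hGK hwc (sphere_subset_closedBall hz)) (by positivity)) (by positivity))
        (by
          have heq : (fun β : ℕ => (‖τ‖ ^ r) ^ β * (M * (δ ^ (β+1))⁻¹))
              = fun β : ℕ => (M * δ⁻¹) * (‖τ‖ ^ r / δ) ^ β := by
            funext β
            rw [div_pow, pow_succ, mul_inv, div_eq_mul_inv]
            ring
          rw [heq]
          refine Summable.mul_left _ (summable_geometric_of_lt_one (by positivity) ?_)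
          rw [div_lt_one hδ]
          exact hτr2)
        (fun z hz => by
          have hzn : ‖τ^r‖ < ‖z‖ := by
            rw [mem_sphere_zero_iff_norm.1 hz]
            exact hτr
          have hg := (hasSum_geom hzn).mul_right (G (w, z))
          have heq : (fun β : ℕ => (τ^r)^β * z ^ (-(β:ℤ)-1) * G (w, z))
              = fun β : ℕ => (τ^r)^β * (G (w, z) * z ^ (-(β:ℤ)-1)) := by
            funext β; ring
          rw [heq] at hg
          exact hg)
      rw [cauchy2] at hint
      have heq2 : (fun β : ℕ => ∮ z in C(0, δ), (τ^r)^β * (G (w, z) * z ^ (-(β:ℤ)-1)))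
          = fun β : ℕ => (τ^r)^β * qI β w := by
        funext β
        rw [circleIntegral_const_mul, hqIdef]
      rwa [heq2] at hint
    -- outer Cauchy formula
    have h1 : DifferentiableOn ℂ (fun u : ℂ => G (u, τ^r)) (closedBall 0 δ) := by
      have : DifferentiableOn ℂ (G ∘ (fun u : ℂ => (u, τ^r))) (closedBall 0 δ) := by
        refine hG.comp (differentiableOn_id.prodMk (differentiableOn_const _)) ?_
        intro u hu
        exact hK ⟨hu, hτrc⟩
      exact this
    have cauchy1 : (∮ w in C(0, δ), (w - τ^s)⁻¹ * G (w, τ^r))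
        = (2 * Real.pi * I) * G (τ^s, τ^r) := by
      have := h1.circleIntegral_sub_inv_smul
        (w := τ^s) (by rw [mem_ball_zero_iff]; exact hτs)
      simpa [smul_eq_mul] using this
    have stepD := hasSum_circleIntegral (ι := ℕ × ℕ) hδ
      (fun p w => ((τ^s)^p.1 * (τ^r)^p.2) * (qI p.2 w * w ^ (-(p.1:ℤ)-1)))
      (fun w => (2 * Real.pi * I) * ((w - τ^s)⁻¹ * G (w, τ^r)))
      (fun p => ((‖τ‖ ^ s) ^ p.1 * (δ ^ (p.1+1))⁻¹)
        * ((‖τ‖ ^ r) ^ p.2 * (2 * Real.pi * M / δ ^ p.2)))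
      (fun p => by
        refine AEStronglyMeasurable.const_mul ?_ _
        refine AEStronglyMeasurable.mul (hqmeas p.2) ?_
        refine Continuous.aestronglyMeasurable ?_
        exact Continuous.zpow₀ (continuous_circleMap 0 δ) _
          (fun θ => Or.inl (circleMap_ne_center hδ0)))
      (fun p w hw => by
        have hwn : ‖w‖ = δ := mem_sphere_zero_iff_norm.1 hw
        have hq := hqb p.2 w (sphere_subset_closedBall hw)
        simp only [norm_mul, norm_pow, norm_zpow_negSucc, hwn]
        calc (‖τ‖ ^ s) ^ p.1 * (‖τ‖ ^ r) ^ p.2 * (‖qI p.2 w‖ * (δ ^ (p.1+1))⁻¹)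
            ≤ (‖τ‖ ^ s) ^ p.1 * (‖τ‖ ^ r) ^ p.2
              * ((2 * Real.pi * M / δ ^ p.2) * (δ ^ (p.1+1))⁻¹) :=
              mul_le_mul_of_nonneg_left
                (mul_le_mul_of_nonneg_right hq (by positivity)) (by positivity)
          _ = ((‖τ‖ ^ s) ^ p.1 * (δ ^ (p.1+1))⁻¹)
              * ((‖τ‖ ^ r) ^ p.2 * (2 * Real.pi * M / δ ^ p.2)) := by ring)
      (by
        refine Summable.mul_of_nonneg
          (f := fun α : ℕ => (‖τ‖ ^ s) ^ α * (δ ^ (α+1))⁻¹)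
          (g := fun β : ℕ => (‖τ‖ ^ r) ^ β * (2 * Real.pi * M / δ ^ β)) ?_ ?_
          (fun α => by positivity) (fun β => by positivity)
        · have heq : (fun α : ℕ => (‖τ‖ ^ s) ^ α * (δ ^ (α+1))⁻¹)
              = fun α : ℕ => δ⁻¹ * (‖τ‖ ^ s / δ) ^ α := by
            funext α
            rw [div_pow, pow_succ, mul_inv, div_eq_mul_inv]
            ring
          rw [heq]
          refine Summable.mul_left _ (summable_geometric_of_lt_one (by positivity) ?_)
          rw [div_lt_one hδ]
          exact hτs2
        · have heq : (fun β : ℕ => (‖τ‖ ^ r) ^ β * (2 * Real.pi * M / δ ^ β))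
              = fun β : ℕ => (2 * Real.pi * M) * (‖τ‖ ^ r / δ) ^ β := by
            funext β
            rw [div_pow, div_eq_mul_inv, div_eq_mul_inv]
            ring
          rw [heq]
          refine Summable.mul_left _ (summable_geometric_of_lt_one (by positivity) ?_)
          rw [div_lt_one hδ]
          exact hτr2)
      (fun w hw => by
        have hwn : ‖τ^s‖ < ‖w‖ := by
          rw [mem_sphere_zero_iff_norm.1 hw]
          exact hτs
        have hgα : HasSum (fun α : ℕ => (τ^s)^α * w ^ (-(α:ℤ)-1)) ((w - τ^s)⁻¹) :=
          hasSum_geom hwn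
        have hnorm1 : Summable fun α : ℕ => ‖(τ^s)^α * w ^ (-(α:ℤ)-1)‖ := by
          have heq : (fun α : ℕ => ‖(τ^s)^α * w ^ (-(α:ℤ)-1)‖)
              = fun α : ℕ => δ⁻¹ * (‖τ‖ ^ s / δ) ^ α := by
            funext α
            simp only [norm_mul, norm_pow, norm_zpow_negSucc,
              mem_sphere_zero_iff_norm.1 hw]
            rw [div_pow, pow_succ, mul_inv, div_eq_mul_inv]
            ring
          rw [heq]
          exact Summable.mul_left _ (summable_geometric_of_lt_one (by positivity)
            (by rw [div_lt_one hδ]; exact hτs2))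
        have hnorm2 : Summable fun β : ℕ => ‖(τ^r)^β * qI β w‖ := by
          refine Summable.of_nonneg_of_le (g := fun β : ℕ => ‖(τ^r)^β * qI β w‖)
            (f := fun β : ℕ => (‖τ‖ ^ r) ^ β * (2 * Real.pi * M / δ ^ β))
            (fun β => norm_nonneg _) (fun β => ?_) ?_
          · simp only [norm_mul, norm_pow]
            exact mul_le_mul_of_nonneg_left (hqb β w (sphere_subset_closedBall hw))
              (by positivity)
          · have heq : (fun β : ℕ => (‖τ‖ ^ r) ^ β * (2 * Real.pi * M / δ ^ β))
                = fun β : ℕ => (2 * Real.pi * M) * (‖τ‖ ^ r / δ) ^ β := by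
              funext β
              rw [div_pow, div_eq_mul_inv, div_eq_mul_inv]
              ring
            rw [heq]
            exact Summable.mul_left _ (summable_geometric_of_lt_one (by positivity)
              (by rw [div_lt_one hδ]; exact hτr2))
        have hprod := hasSum_mul_norm hgα (stepA w hw) hnorm1 hnorm2
        have heq : (fun p : ℕ × ℕ => ((τ^s)^p.1 * w ^ (-(p.1:ℤ)-1))
              * ((τ^r)^p.2 * qI p.2 w))
            = fun p : ℕ × ℕ => ((τ^s)^p.1 * (τ^r)^p.2) * (qI p.2 w * w ^ (-(p.1:ℤ)-1)) := by
          funext p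
          ring
        rw [heq] at hprod
        have hval : (w - τ^s)⁻¹ * ((2 * Real.pi * I) * G (w, τ^r))
            = (2 * Real.pi * I) * ((w - τ^s)⁻¹ * G (w, τ^r)) := by ring
        rwa [hval] at hprod)
    -- finish : divide by c
    have heqD : (fun p : ℕ × ℕ =>
        ∮ w in C(0, δ), ((τ^s)^p.1 * (τ^r)^p.2) * (qI p.2 w * w ^ (-(p.1:ℤ)-1)))
        = fun p : ℕ × ℕ => ((τ^s)^p.1 * (τ^r)^p.2)
            * ∮ w in C(0, δ), qI p.2 w * w ^ (-(p.1:ℤ)-1) := by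
      funext p
      rw [circleIntegral_const_mul]
    rw [heqD] at stepD
    have hval : (∮ w in C(0, δ), (2 * Real.pi * I) * ((w - τ^s)⁻¹ * G (w, τ^r)))
        = c * G (τ^s, τ^r) := by
      rw [circleIntegral_const_mul, cauchy1, hcdef]
      ring
    rw [hval] at stepD
    have hfinal := stepD.mul_left (c⁻¹)
    rw [← mul_assoc, inv_mul_cancel₀ hc0, one_mul] at hfinal
    have heqF : (fun p : ℕ × ℕ => c⁻¹ * (((τ^s)^p.1 * (τ^r)^p.2)
        * ∮ w in C(0, δ), qI p.2 w * w ^ (-(p.1:ℤ)-1)))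
        = fun p : ℕ × ℕ => B p * τ ^ (s * p.1 + r * p.2) := by
      funext p
      rw [hBdef]
      simp only
      rw [pow_add, pow_mul, pow_mul]
      ring
    rwa [heqF] at hfinal

lemma circleIntegral_zpow_ne {n : ℤ} (hn : n ≠ -1) (ε : ℝ) :
    (∮ τ in C(0, ε), τ ^ n) = 0 := by
  have := circleIntegral.integral_sub_zpow_of_ne hn 0 0 ε
  simpa using this

lemma circleIntegral_zpow_neg_one {ε : ℝ} (hε : 0 < ε) :
    (∮ τ in C(0, ε), τ ^ (-1 : ℤ)) = 2 * Real.pi * I := by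
  have := circleIntegral.integral_sub_inv_of_mem_ball (c := (0:ℂ)) (w := 0) (R := ε)
    (by simpa using hε)
  simpa using this

lemma two_pi_I_ne_zero' : (2 * (Real.pi:ℂ) * I) ≠ 0 := by
  apply mul_ne_zero
  · simp [Complex.ext_iff, Real.pi_ne_zero]
  · exact I_ne_zero


end Stmt2Auxiliary

set_option maxHeartbeats 1000000 in
/-- For coprime integers `2 ≤ r < s` and `f` holomorphic on a punctured disc
with Laurent coefficients `(a_m)`, the moment condition — for every `G` holomorphic near
`0 ∈ ℂ²`, `∮_{|τ|=ε} f(τ) G(τ^s, τ^r) τ^{-(r-1)(s-1)} dτ = 0` for all sufficiently small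
`ε > 0` — holds iff `a_m = 0` for every `m` outside the numerical semigroup
`S(r,s) = {αs + βr : α, β ∈ ℕ}`. -/
theorem stmt2 (r s : ℕ) (hr : 2 ≤ r) (hrs : r < s) (hcop : Nat.Coprime r s)
    (ρ : ℝ) (hρ : 0 < ρ) (f : ℂ → ℂ)
    (hf : DifferentiableOn ℂ f {τ : ℂ | 0 < ‖τ‖ ∧ ‖τ‖ < ρ})
    (a : ℤ → ℂ)
    (ha : ∀ τ : ℂ, 0 < ‖τ‖ → ‖τ‖ < ρ →
      HasSum (fun m : ℤ => a m * τ ^ m) (f τ)) :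
    (∀ G : ℂ × ℂ → ℂ,
      (∃ V : Set (ℂ × ℂ), IsOpen V ∧ (0 : ℂ × ℂ) ∈ V ∧ DifferentiableOn ℂ G V) →
      ∃ ε₀ : ℝ, 0 < ε₀ ∧ ∀ ε : ℝ, 0 < ε → ε < ε₀ →
        (∮ τ in C(0, ε), f τ * G (τ ^ s, τ ^ r) * τ ^ (-(((r - 1) * (s - 1) : ℕ) : ℤ)))
          = 0) ↔
    (∀ m : ℤ, ¬ (∃ α β : ℕ, m = (α : ℤ) * (s : ℤ) + (β : ℤ) * (r : ℤ)) → a m = 0) := by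
  classical
  have hs1 : 1 ≤ s := by omega
  have hr1 : 1 ≤ r := by omega
  have hNZ : ((((r - 1) * (s - 1) : ℕ)) : ℤ) = (r:ℤ) * s - r - s + 1 := by
    push_cast [Nat.cast_sub hr1, Nat.cast_sub hs1]
    ring
  have habs : ∀ τ : ℂ, ‖τ‖ = ‖τ‖ := fun τ => rfl
  -- Laurent coefficients norm-summability at every admissible radius
  have hsum0 : ∀ {ε : ℝ}, 0 < ε → ε < ρ → Summable (fun m : ℤ => ‖a m * (ε:ℂ) ^ m‖) := by
    intro ε hε hερ
    have h1 : ‖(ε:ℂ)‖ = ε := by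
      rw [Complex.norm_real, Real.norm_eq_abs, abs_of_pos hε]
    exact summable_norm_iff.2 (ha (ε:ℂ) (by rw [h1]; exact hε) (by rw [h1]; exact hερ)).summable
  have henC : ∀ {ε : ℝ}, 0 < ε → ‖(ε:ℂ)‖ = ε := by
    intro ε hε
    rw [Complex.norm_real, Real.norm_eq_abs, abs_of_pos hε]
  have henC0 : ∀ {ε : ℝ}, 0 < ε → (ε:ℂ) ≠ 0 := fun hε =>
    Complex.ofReal_ne_zero.2 hε.ne'
  constructor
  · -- moment condition implies vanishing of coefficients outside the semigroup
    intro hmom m hm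
    obtain ⟨α, β, hαβ⟩ := not_mem_imp_sym_mem r s hr hrs hcop hm
    obtain ⟨ε₀, hε₀, hvan⟩ := hmom (fun p : ℂ × ℂ => p.1 ^ α * p.2 ^ β)
      ⟨Set.univ, isOpen_univ, trivial,
        ((differentiable_fst.pow α).mul (differentiable_snd.pow β)).differentiableOn⟩
    obtain ⟨ε, hε, hεlt⟩ : ∃ ε : ℝ, 0 < ε ∧ ε < min ε₀ ρ :=
      ⟨min ε₀ ρ / 2, by positivity, by
        have : (0:ℝ) < min ε₀ ρ := lt_min hε₀ hρ
        linarith⟩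
    have hεe : ε < ε₀ := lt_of_lt_of_le hεlt (min_le_left _ _)
    have hερ : ε < ρ := lt_of_lt_of_le hεlt (min_le_right _ _)
    have hint := hvan ε hε hεe
    -- the exponent shift
    set c : ℤ := ((s * α + r * β : ℕ) : ℤ) - (((r - 1) * (s - 1) : ℕ) : ℤ) with hcdef
    have hc : c = -m - 1 := by
      rw [hcdef, hNZ]
      push_cast
      linarith
    -- rewrite the integral
    have key : (∮ τ in C(0, ε), f τ * τ ^ c) = 0 := by
      refine Eq.trans (circleIntegral.integral_congr hε.le fun τ hτ => ?_) hint
      have hτn : ‖τ‖ = ε := mem_sphere_zero_iff_norm.1 hτ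
      have hτ0 : τ ≠ 0 := by
        intro h0; rw [h0] at hτn; simp at hτn; exact absurd hτn.symm hε.ne'
      show f τ * τ ^ c = f τ * ((τ ^ s) ^ α * (τ ^ r) ^ β) * τ ^ (-(((r-1)*(s-1) : ℕ) : ℤ))
      have hpow : (τ ^ s) ^ α * (τ ^ r) ^ β = τ ^ ((s * α + r * β : ℕ)) := by
        rw [pow_add, ← pow_mul, ← pow_mul]
      rw [hpow, mul_assoc, hcdef]
      congr 1
      rw [← zpow_natCast τ (s * α + r * β), ← zpow_add₀ hτ0, sub_eq_add_neg]
    -- interchange sum and integral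
    have hHS := hasSum_circleIntegral (ι := ℤ) hε
      (fun m' τ => a m' * τ ^ (m' + c))
      (fun τ => f τ * τ ^ c)
      (fun m' => ‖a m' * (ε:ℂ) ^ (m' + c)‖)
      (fun m' => by
        refine Continuous.aestronglyMeasurable ?_
        exact continuous_const.mul (Continuous.zpow₀ (continuous_circleMap 0 ε) _
          (fun θ => Or.inl (circleMap_ne_center hε.ne'))))
      (fun m' τ hτ => by
        have hτn : ‖τ‖ = ε := mem_sphere_zero_iff_norm.1 hτ
        refine le_of_eq ?_
        show ‖a m' * τ ^ (m' + c)‖ = ‖a m' * (ε:ℂ) ^ (m' + c)‖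
        rw [norm_mul, norm_mul, norm_zpow, norm_zpow, hτn, henC hε])
      (by
        have heq : (fun m' : ℤ => ‖a m' * (ε:ℂ) ^ (m' + c)‖)
            = fun m' : ℤ => ‖a m' * (ε:ℂ) ^ m'‖ * ‖(ε:ℂ) ^ c‖ := by
          funext m'
          rw [zpow_add₀ (henC0 hε), ← mul_assoc, norm_mul]
        rw [heq]
        exact (hsum0 hε hερ).mul_right _)
      (fun τ hτ => by
        have hτn : ‖τ‖ = ε := mem_sphere_zero_iff_norm.1 hτ
        have hτ0 : τ ≠ 0 := by
          intro h0; rw [h0] at hτn; simp at hτn; exact absurd hτn.symm hε.ne'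
        have habs0 : 0 < ‖τ‖ := by
          rw [habs, hτn]; exact hε
        have h1 := (ha τ habs0 (by rw [habs, hτn]; exact hερ)).mul_right (τ ^ c)
        have heq : (fun m' : ℤ => a m' * τ ^ m' * τ ^ c)
            = fun m' : ℤ => a m' * τ ^ (m' + c) := by
          funext m'
          rw [mul_assoc, ← zpow_add₀ hτ0]
        rwa [heq] at h1)
    rw [key] at hHS
    -- identify each integral
    have hterm : (fun m' : ℤ => ∮ τ in C(0, ε), a m' * τ ^ (m' + c))
        = fun m' : ℤ => if m' = m then (2 * Real.pi * I) * a m else 0 := by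
      funext m'
      rw [circleIntegral_const_mul]
      by_cases hm' : m' = m
      · subst hm'
        rw [if_pos rfl]
        have : m' + c = -1 := by rw [hc]; ring
        rw [this, circleIntegral_zpow_neg_one hε]
        ring
      · rw [if_neg hm']
        have : m' + c ≠ -1 := by
          rw [hc]
          intro h
          exact hm' (by linarith)
        rw [circleIntegral_zpow_ne this, mul_zero]
    rw [hterm] at hHS
    have hval := (hasSum_ite_eq m ((2 * Real.pi * I) * a m)).unique hHS
    have h2πI : (2 * (Real.pi:ℂ) * I) ≠ 0 := two_pi_I_ne_zero'
    exact (mul_eq_zero.1 hval).resolve_left h2πI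
  · -- vanishing of coefficients implies the moment condition
    intro hvan G hGex
    obtain ⟨V, hV, h0, hG⟩ := hGex
    obtain ⟨ε₁, hε₁, hε₁le, B, hBsum, hBexp⟩ :=
      expansion r s (by omega) (by omega) G V hV h0 hG
    refine ⟨min ε₁ ρ, lt_min hε₁ hρ, fun ε hε hεlt => ?_⟩
    have hεε₁ : ε < ε₁ := lt_of_lt_of_le hεlt (min_le_left _ _)
    have hερ : ε < ρ := lt_of_lt_of_le hεlt (min_le_right _ _)
    have hHS := hasSum_circleIntegral (ι := ℤ × (ℕ × ℕ)) hε
      (fun q τ => (a q.1 * B q.2) *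
        τ ^ (q.1 + ((s * q.2.1 + r * q.2.2 : ℕ) : ℤ) - (((r - 1) * (s - 1) : ℕ) : ℤ)))
      (fun τ => f τ * G (τ ^ s, τ ^ r) * τ ^ (-(((r - 1) * (s - 1) : ℕ) : ℤ)))
      (fun q => ‖(a q.1 * B q.2) *
        (ε:ℂ) ^ (q.1 + ((s * q.2.1 + r * q.2.2 : ℕ) : ℤ) - (((r - 1) * (s - 1) : ℕ) : ℤ))‖)
      (fun q => by
        refine Continuous.aestronglyMeasurable ?_
        exact continuous_const.mul (Continuous.zpow₀ (continuous_circleMap 0 ε) _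
          (fun θ => Or.inl (circleMap_ne_center hε.ne'))))
      (fun q τ hτ => by
        have hτn : ‖τ‖ = ε := mem_sphere_zero_iff_norm.1 hτ
        refine le_of_eq ?_
        show ‖(a q.1 * B q.2) *
            τ ^ (q.1 + ((s * q.2.1 + r * q.2.2 : ℕ) : ℤ) - (((r-1)*(s-1) : ℕ) : ℤ))‖
          = ‖(a q.1 * B q.2) *
            (ε:ℂ) ^ (q.1 + ((s * q.2.1 + r * q.2.2 : ℕ) : ℤ) - (((r-1)*(s-1) : ℕ) : ℤ))‖
        simp only [norm_mul, norm_zpow]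
        rw [hτn, henC hε])
      (by
        have heq : (fun q : ℤ × (ℕ × ℕ) => ‖(a q.1 * B q.2) *
            (ε:ℂ) ^ (q.1 + ((s * q.2.1 + r * q.2.2 : ℕ) : ℤ) - (((r-1)*(s-1) : ℕ) : ℤ))‖)
            = fun q : ℤ × (ℕ × ℕ) => ‖a q.1 * (ε:ℂ) ^ q.1‖
              * ((‖B q.2‖ * ε ^ (s * q.2.1 + r * q.2.2))
                * ‖(ε:ℂ) ^ (-(((r-1)*(s-1) : ℕ) : ℤ))‖) := by
          funext q
          have hsplit : q.1 + ((s * q.2.1 + r * q.2.2 : ℕ) : ℤ) - (((r-1)*(s-1) : ℕ) : ℤ)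
              = q.1 + ((s * q.2.1 + r * q.2.2 : ℕ) : ℤ) + (-(((r-1)*(s-1) : ℕ) : ℤ)) := by
            ring
          rw [hsplit, zpow_add₀ (henC0 hε), zpow_add₀ (henC0 hε)]
          rw [zpow_natCast]
          have hnn : ‖((ε:ℂ)) ^ (s * q.2.1 + r * q.2.2)‖ = ε ^ (s * q.2.1 + r * q.2.2) := by
            rw [norm_pow, henC hε]
          simp only [norm_mul, norm_zpow]
          rw [norm_pow, henC hε]
          ring
        rw [heq]
        refine Summable.mul_of_nonneg (f := fun m' : ℤ => ‖a m' * (ε:ℂ) ^ m'‖)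
          (g := fun p : ℕ × ℕ => ‖B p‖ * ε ^ (s * p.1 + r * p.2)
            * ‖(ε:ℂ) ^ (-(((r-1)*(s-1) : ℕ) : ℤ))‖)
          (hsum0 hε hερ) ?_ (fun m' => norm_nonneg _) (fun p => by positivity)
        exact (hBsum ε hε hεε₁).mul_right _)
      (fun τ hτ => by
        have hτn : ‖τ‖ = ε := mem_sphere_zero_iff_norm.1 hτ
        have hτ0 : τ ≠ 0 := by
          intro h0; rw [h0] at hτn; simp at hτn; exact absurd hτn.symm hε.ne'
        have habs0 : 0 < ‖τ‖ := by rw [habs, hτn]; exact hε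
        have h1 := ha τ habs0 (by rw [habs, hτn]; exact hερ)
        have h2 := hBexp τ (by rw [habs, hτn]; exact hεε₁)
        have hn1 : Summable fun m' : ℤ => ‖a m' * τ ^ m'‖ := by
          have heq : (fun m' : ℤ => ‖a m' * τ ^ m'‖)
              = fun m' : ℤ => ‖a m' * (ε:ℂ) ^ m'‖ := by
            funext m'
            rw [norm_mul, norm_mul, norm_zpow, norm_zpow, hτn, henC hε]
          rw [heq]
          exact hsum0 hε hερ
        have hn2 : Summable fun p : ℕ × ℕ => ‖B p * τ ^ (s * p.1 + r * p.2)‖ := by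
          have heq : (fun p : ℕ × ℕ => ‖B p * τ ^ (s * p.1 + r * p.2)‖)
              = fun p : ℕ × ℕ => ‖B p‖ * ε ^ (s * p.1 + r * p.2) := by
            funext p
            rw [norm_mul, norm_pow, hτn]
          rw [heq]
          exact hBsum ε hε hεε₁
        have hprod := (hasSum_mul_norm h1 h2 hn1 hn2).mul_right
          (τ ^ (-(((r - 1) * (s - 1) : ℕ) : ℤ)))
        have heq : (fun q : ℤ × (ℕ × ℕ) =>
            (a q.1 * τ ^ q.1) * (B q.2 * τ ^ (s * q.2.1 + r * q.2.2))
              * τ ^ (-(((r - 1) * (s - 1) : ℕ) : ℤ)))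
            = fun q : ℤ × (ℕ × ℕ) => (a q.1 * B q.2) *
              τ ^ (q.1 + ((s * q.2.1 + r * q.2.2 : ℕ) : ℤ) - (((r-1)*(s-1) : ℕ) : ℤ)) := by
          funext q
          have hsplit : q.1 + ((s * q.2.1 + r * q.2.2 : ℕ) : ℤ) - (((r-1)*(s-1) : ℕ) : ℤ)
              = q.1 + ((s * q.2.1 + r * q.2.2 : ℕ) : ℤ) + (-(((r-1)*(s-1) : ℕ) : ℤ)) := by
            ring
          rw [hsplit, zpow_add₀ hτ0, zpow_add₀ hτ0, zpow_natCast]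
          ring
        rwa [heq] at hprod)
    -- every term integrates to zero
    have hterm : ∀ q : ℤ × (ℕ × ℕ),
        (∮ τ in C(0, ε), (a q.1 * B q.2) *
          τ ^ (q.1 + ((s * q.2.1 + r * q.2.2 : ℕ) : ℤ) - (((r-1)*(s-1) : ℕ) : ℤ))) = 0 := by
      intro q
      rw [circleIntegral_const_mul]
      by_cases hexp : q.1 + ((s * q.2.1 + r * q.2.2 : ℕ) : ℤ) - (((r-1)*(s-1) : ℕ) : ℤ) = -1
      · -- then the coefficient vanishes
        have hq1 : q.1 = (r:ℤ) * s - r - s - ((s * q.2.1 + r * q.2.2 : ℕ) : ℤ) := by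
          rw [hNZ] at hexp
          linarith
        have hmemS : ∃ α β : ℕ, ((s * q.2.1 + r * q.2.2 : ℕ) : ℤ)
            = (α:ℤ) * s + (β:ℤ) * r := ⟨q.2.1, q.2.2, by push_cast; ring⟩
        have hnotS := mem_imp_sym_not_mem r s hr hrs hcop hmemS
        rw [← hq1] at hnotS
        rw [hvan q.1 hnotS, zero_mul, zero_mul]
      · rw [circleIntegral_zpow_ne hexp, mul_zero]
    have heq0 : (fun q : ℤ × (ℕ × ℕ) => ∮ τ in C(0, ε), (a q.1 * B q.2) *
        τ ^ (q.1 + ((s * q.2.1 + r * q.2.2 : ℕ) : ℤ) - (((r-1)*(s-1) : ℕ) : ℤ)))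
        = fun _ => (0:ℂ) := funext hterm
    rw [heq0] at hHS
    exact (hasSum_zero.unique hHS).symm
end

section
/- Let n ≥ 1 and 0 ≤ ν ≤ n be integers, let k ∈ ℕ, and fix j ∈ {1, …, n}. For every function ξ : ℂⁿ → ℂ of class C^k with compact support, the integral h(z) = ∫_{ℂⁿ} (conj(ζ_j) − conj(z_j)) · ξ(ζ) · ‖ζ − z‖^{-2ν} dλ(ζ) is absolutely convergent for every z ∈ ℂⁿ, and the function h is of class C^k on ℂⁿ. -/
open MeasureTheory Complex

open Metric Set

/-- The Euclidean norm on `ℂⁿ = Fin n → ℂ`. -/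
noncomputable def euclNorm {n : ℕ} (w : Fin n → ℂ) : ℝ :=
  Real.sqrt (∑ i, ‖w i‖ ^ 2)

lemma continuous_euclNorm {n : ℕ} : Continuous (euclNorm (n := n)) := by
  unfold euclNorm
  exact Real.continuous_sqrt.comp (continuous_finset_sum _ fun i _ =>
    (continuous_norm.comp (continuous_apply i)).pow 2)

lemma euclNorm_nonneg {n : ℕ} (w : Fin n → ℂ) : 0 ≤ euclNorm w := Real.sqrt_nonneg _

lemma euclNorm_neg {n : ℕ} (w : Fin n → ℂ) : euclNorm (-w) = euclNorm w := by
  unfold euclNorm; simp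

lemma abs_apply_le_euclNorm {n : ℕ} (w : Fin n → ℂ) (j : Fin n) :
    ‖w j‖ ≤ euclNorm w := by
  refine Real.le_sqrt_of_sq_le ?_
  exact Finset.single_le_sum (f := fun i => ‖w i‖ ^ 2)
    (fun i _ => sq_nonneg _) (Finset.mem_univ j)

lemma norm_le_euclNorm {n : ℕ} (w : Fin n → ℂ) : ‖w‖ ≤ euclNorm w := by
  rcases Nat.eq_zero_or_pos n with h | h
  · subst h
    have : w = 0 := Subsingleton.elim _ _
    subst this
    rw [norm_zero]; exact euclNorm_nonneg (0 : Fin 0 → ℂ)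
  · refine (pi_norm_le_iff_of_nonneg (euclNorm_nonneg w)).mpr fun i => ?_
    exact abs_apply_le_euclNorm w i

/-- The negative-power-of-the-norm kernel `x ↦ ‖x‖⁻ᵐ` is integrable on balls as soon as
`m + 1 ≤ dim`. -/
lemma integrableOn_inv_pow_norm_ball {E : Type*} [NormedAddCommGroup E] [NormedSpace ℝ E]
    [MeasurableSpace E] [BorelSpace E] [FiniteDimensional ℝ E] [Nontrivial E]
    (μ : Measure E) [μ.IsAddHaarMeasure] {m : ℕ} (hm : m + 1 ≤ Module.finrank ℝ E) (R : ℝ) :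
    IntegrableOn (fun x : E => (‖x‖ ^ m)⁻¹) (ball (0 : E) R) μ := by
  set d := Module.finrank ℝ E with hd
  have hmd : m ≤ d - 1 := by omega
  set F : ℝ → ENNReal := fun t => if t < R then ENNReal.ofReal ((t ^ m)⁻¹) else 0 with hF
  have hFmeas : Measurable F := Measurable.ite measurableSet_Iio
    (ENNReal.measurable_ofReal.comp ((measurable_id.pow_const m).inv)) measurable_const
  constructor
  · exact ((measurable_norm.pow_const m).inv).aestronglyMeasurable
  · rw [hasFiniteIntegral_iff_norm]
    have h1 : ∀ x : E, ENNReal.ofReal ‖(‖x‖ ^ m)⁻¹‖ = ENNReal.ofReal ((‖x‖ ^ m)⁻¹) := by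
      intro x
      rw [Real.norm_of_nonneg (by positivity)]
    simp_rw [h1]
    have step1 : ∫⁻ x in ball (0:E) R, ENNReal.ofReal ((‖x‖ ^ m)⁻¹) ∂μ
        = ∫⁻ x, F ‖x‖ ∂μ := by
      rw [← lintegral_indicator measurableSet_ball]
      congr 1; ext x
      by_cases hx : x ∈ ball (0:E) R
      · rw [indicator_of_mem hx]
        simp only [hF]
        rw [if_pos (mem_ball_zero_iff.mp hx)]
      · rw [indicator_of_notMem hx]
        simp only [hF]
        rw [if_neg (fun h => hx (mem_ball_zero_iff.mpr h))]
    have step2 : ∫⁻ x, F ‖x‖ ∂μ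
        = ∫⁻ x : ({0}ᶜ : Set E), F ‖x.1‖ ∂(μ.comap Subtype.val) := by
      have := lintegral_subtype_comap (μ := μ)
        (measurableSet_singleton (0:E)).compl (fun x => F ‖x‖)
      rw [MeasureTheory.restrict_compl_singleton] at this
      exact this.symm
    have step3 : ∫⁻ x : ({0}ᶜ : Set E), F ‖x.1‖ ∂(μ.comap Subtype.val)
        = ∫⁻ p : sphere (0:E) 1 × Ioi (0:ℝ), F p.2.1 ∂(μ.toSphere.prod
            (Measure.volumeIoiPow (d - 1))) := by
      have := (μ.measurePreserving_homeomorphUnitSphereProd).lintegral_comp_emb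
        (Homeomorph.measurableEmbedding _) (fun p => F p.2.1)
      simpa using this
    have step4 : ∫⁻ p : sphere (0:E) 1 × Ioi (0:ℝ), F p.2.1 ∂(μ.toSphere.prod
            (Measure.volumeIoiPow (d - 1)))
        = μ.toSphere univ * ∫⁻ r : Ioi (0:ℝ), F r.1 ∂(Measure.volumeIoiPow (d - 1)) := by
      have hf' : Measurable (fun r : Ioi (0:ℝ) => F r.1) :=
        hFmeas.comp measurable_subtype_coe
      have e4 := lintegral_map (μ := μ.toSphere.prod (Measure.volumeIoiPow (d - 1)))
        hf' measurable_snd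
      rw [Measure.map_snd_prod, lintegral_smul_measure] at e4
      exact e4.symm
    have step5 : ∫⁻ r : Ioi (0:ℝ), F r.1 ∂(Measure.volumeIoiPow (d - 1))
        = ∫⁻ t in Ioi (0:ℝ), ENNReal.ofReal (t ^ (d-1)) * F t := by
      have hf' : Measurable (fun r : Ioi (0:ℝ) => F r.1) :=
        hFmeas.comp measurable_subtype_coe
      have hg' : Measurable (fun r : Ioi (0:ℝ) => ENNReal.ofReal (r.1 ^ (d-1))) :=
        ENNReal.measurable_ofReal.comp (measurable_subtype_coe.pow_const (d-1))
      rw [Measure.volumeIoiPow]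
      rw [lintegral_withDensity_eq_lintegral_mul _ hg' hf']
      simp only [Pi.mul_apply]
      exact lintegral_subtype_comap measurableSet_Ioi
        (fun t => ENNReal.ofReal (t ^ (d-1)) * F t)
    have step6 : ∫⁻ t in Ioi (0:ℝ), ENNReal.ofReal (t ^ (d-1)) * F t < ⊤ := by
      set M : ℝ := max R 1 ^ (d - 1 - m) with hM
      have bound : ∀ t ∈ Ioi (0:ℝ), ENNReal.ofReal (t ^ (d-1)) * F t
          ≤ (Ioo (0:ℝ) R).indicator (fun _ => ENNReal.ofReal M) t := by
        intro t ht
        simp only [hF]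
        by_cases htR : t < R
        · have ht0 : (0:ℝ) < t := ht
          rw [if_pos htR, indicator_of_mem (Set.mem_Ioo.mpr ⟨ht0, htR⟩),
            ← ENNReal.ofReal_mul (pow_nonneg ht0.le _)]
          apply ENNReal.ofReal_le_ofReal
          have hts : t ^ (d-1) * (t ^ m)⁻¹ = t ^ (d - 1 - m) := by
            rw [pow_sub₀ t ht0.ne' hmd]
          rw [hts, hM]
          exact pow_le_pow_left₀ ht0.le (le_max_of_le_left htR.le) _
        · rw [if_neg htR, mul_zero, indicator_apply]
          split <;> simp
      calc ∫⁻ t in Ioi (0:ℝ), ENNReal.ofReal (t ^ (d-1)) * F t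
          ≤ ∫⁻ t in Ioi (0:ℝ), (Ioo (0:ℝ) R).indicator (fun _ => ENNReal.ofReal M) t :=
            setLIntegral_mono (measurable_const.indicator measurableSet_Ioo) bound
        _ ≤ ∫⁻ t, (Ioo (0:ℝ) R).indicator (fun _ => ENNReal.ofReal M) t :=
            setLIntegral_le_lintegral _ _
        _ = ENNReal.ofReal M * volume (Ioo (0:ℝ) R) := by
            rw [lintegral_indicator_const measurableSet_Ioo]
        _ < ⊤ := ENNReal.mul_lt_top ENNReal.ofReal_lt_top measure_Ioo_lt_top
    rw [step1, step2, step3, step4, step5]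
    exact ENNReal.mul_lt_top (measure_lt_top _ _) step6

lemma bmKer_norm {n ν : ℕ} (j : Fin n) (w : Fin n → ℂ) :
    ‖(starRingEnd ℂ) (w j) * ((euclNorm w : ℂ) ^ (2 * ν))⁻¹‖
      = ‖w j‖ * ((euclNorm w ^ (2 * ν))⁻¹) := by
  rw [norm_mul, norm_inv, norm_pow, Complex.norm_conj, Complex.norm_real,
    Real.norm_of_nonneg (euclNorm_nonneg w)]

lemma bmKer_measurable {n ν : ℕ} (j : Fin n) :
    Measurable (fun w : Fin n → ℂ =>
      (starRingEnd ℂ) (w j) * ((euclNorm w : ℂ) ^ (2 * ν))⁻¹) := by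
  apply Measurable.mul
  · exact (Complex.continuous_conj.comp (continuous_apply j)).measurable
  · exact ((Complex.measurable_ofReal.comp continuous_euclNorm.measurable).pow_const
      (2 * ν)).inv

lemma bmKer_locallyIntegrable {n ν : ℕ} (hn : 1 ≤ n) (hν : ν ≤ n) (j : Fin n) :
    LocallyIntegrable (fun w : Fin n → ℂ =>
      (starRingEnd ℂ) (w j) * ((euclNorm w : ℂ) ^ (2 * ν))⁻¹) volume := by
  haveI : Nonempty (Fin n) := ⟨j⟩
  rcases Nat.eq_zero_or_pos ν with hν0 | hν1
  · subst hν0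
    simp only [Nat.mul_zero, pow_zero, inv_one, mul_one]
    exact (Complex.continuous_conj.comp (continuous_apply j)).locallyIntegrable
  · have hfr : Module.finrank ℝ (Fin n → ℂ) = 2 * n := by
      simp [Module.finrank_pi_fintype, Complex.finrank_real_complex]
      ring
    set m := 2 * ν - 1 with hm
    have hm1 : m + 1 = 2 * ν := by omega
    have hmd : m + 1 ≤ Module.finrank ℝ (Fin n → ℂ) := by omega
    intro x
    refine ⟨ball (0 : Fin n → ℂ) (‖x‖ + 1), ?_, ?_⟩
    · exact (isOpen_ball.mem_nhds (mem_ball_zero_iff.mpr (by linarith [norm_nonneg x])))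
    · refine Integrable.mono (integrableOn_inv_pow_norm_ball volume hmd (‖x‖ + 1))
        (bmKer_measurable j).aestronglyMeasurable.restrict (ae_of_all _ fun w => ?_)
      rw [bmKer_norm, Real.norm_of_nonneg (by positivity)]
      by_cases hw : w = 0
      · subst hw; simp
      · have hwn : 0 < ‖w‖ := norm_pos_iff.mpr hw
        have he : 0 < euclNorm w := lt_of_lt_of_le hwn (norm_le_euclNorm w)
        calc ‖w j‖ * (euclNorm w ^ (2 * ν))⁻¹
            ≤ euclNorm w * (euclNorm w ^ (2 * ν))⁻¹ := by
              gcongr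
              exact abs_apply_le_euclNorm w j
          _ = (euclNorm w ^ m)⁻¹ := by
              rw [← hm1, pow_succ]
              field_simp
          _ ≤ (‖w‖ ^ m)⁻¹ := by
              gcongr
              exact norm_le_euclNorm w

/-- For `ν ≤ n` and `ξ : ℂⁿ → ℂ` of class `C^k` with compact support, the
Bochner–Martinelli-type integral
`h(z) = ∫ (conj ζ_j − conj z_j) ξ(ζ) ‖ζ − z‖^{-2ν} dλ(ζ)`
(Lebesgue measure, Euclidean norm) is absolutely convergent for every `z` and defines a
`C^k` function of `z`. -/
theorem stmt3 (n ν k : ℕ) (hn : 1 ≤ n) (hν : ν ≤ n) (j : Fin n)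
    (ξ : (Fin n → ℂ) → ℂ)
    (hξ : ContDiff ℝ (k : ℕ∞) ξ) (hsupp : HasCompactSupport ξ) :
    (∀ z : Fin n → ℂ,
      Integrable (fun ζ : Fin n → ℂ =>
        (starRingEnd ℂ (ζ j) - starRingEnd ℂ (z j)) * ξ ζ *
          ((euclNorm (ζ - z) : ℂ) ^ (2 * ν))⁻¹)) ∧
    ContDiff ℝ (k : ℕ∞) (fun z : Fin n → ℂ =>
      ∫ ζ : Fin n → ℂ,
        (starRingEnd ℂ (ζ j) - starRingEnd ℂ (z j)) * ξ ζ *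
          ((euclNorm (ζ - z) : ℂ) ^ (2 * ν))⁻¹) := by
  set K : (Fin n → ℂ) → ℂ :=
    fun w => (starRingEnd ℂ) (w j) * ((euclNorm w : ℂ) ^ (2 * ν))⁻¹ with hK
  have hKneg : ∀ w, K (-w) = -K w := by
    intro w
    simp only [hK, Pi.neg_apply, map_neg, euclNorm_neg, neg_mul]
  have hKloc : LocallyIntegrable (fun w => -K w) volume :=
    (bmKer_locallyIntegrable hn hν j).neg
  have hcont : Continuous ξ := hξ.continuous
  have hexists : ConvolutionExists (fun w => -K w) ξ (ContinuousLinearMap.mul ℝ ℂ) volume :=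
    hsupp.convolutionExists_right _ hKloc hcont
  have key : ∀ z ζ : Fin n → ℂ,
      (fun t => -K t * ξ (z - t)) (z - ζ)
        = (starRingEnd ℂ (ζ j) - starRingEnd ℂ (z j)) * ξ ζ *
            ((euclNorm (ζ - z) : ℂ) ^ (2 * ν))⁻¹ := by
    intro z ζ
    have h1 : K (ζ - z) = -K (z - ζ) := by rw [← hKneg (z - ζ), neg_sub]
    show -K (z - ζ) * ξ (z - (z - ζ)) = _
    rw [sub_sub_cancel, ← h1, hK]
    simp only [Pi.sub_apply, map_sub]
    ring
  constructor
  · intro z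
    have h1 : Integrable (fun t => -K t * ξ (z - t)) volume := by
      have := hexists z
      simpa [ConvolutionExistsAt] using this
    have h2 := h1.comp_sub_left z
    exact h2.congr (ae_of_all _ fun ζ => key z ζ)
  · have hsm : ContDiff ℝ (k : ℕ∞)
        (convolution (fun w => -K w) ξ (ContinuousLinearMap.mul ℝ ℂ) volume) :=
      hsupp.contDiff_convolution_right _ hKloc hξ
    have heq : (fun z : Fin n → ℂ =>
        ∫ ζ : Fin n → ℂ,
          (starRingEnd ℂ (ζ j) - starRingEnd ℂ (z j)) * ξ ζ *
            ((euclNorm (ζ - z) : ℂ) ^ (2 * ν))⁻¹)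
        = convolution (fun w => -K w) ξ (ContinuousLinearMap.mul ℝ ℂ) volume := by
      funext z
      rw [convolution_def]
      simp only [ContinuousLinearMap.mul_apply']
      rw [← integral_sub_left_eq_self (fun t => -K t * ξ (z - t)) volume z]
      exact integral_congr_ae (ae_of_all _ fun ζ => (key z ζ).symm)
    rw [heq]
    exact hsm
end

section
/- Let r and s be coprime integers with 2 ≤ r < s. Then there exists L ∈ ℕ, depending only on r and s, with the following property: if Φ : ℂ² → ℂ is of class C^{L+1} on an open neighborhood of 0 ∈ ℂ² and the function τ ↦ Φ(τ^s, τ^r) is holomorphic on some punctured disc {0 < |τ| < ρ}, then there exist an open neighborhood U of 0 in ℂ² and a holomorphic function F on U such that F(τ^s, τ^r) = Φ(τ^s, τ^r) for all sufficiently small τ. -/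
open MeasureTheory Complex
open Filter Set Function
open scoped ENNReal NNReal

/-- Iterated derivative of a monomial. -/
lemma iterDeriv_monomial : ∀ (k σ : ℕ) (z : ℂ),
    iteratedDeriv k (fun z : ℂ => z ^ σ) z = (σ.descFactorial k : ℂ) * z ^ (σ - k) := by
  intro k
  induction k with
  | zero => intro σ z; simp
  | succ k ih =>
    intro σ z
    rw [iteratedDeriv_succ']
    cases σ with
    | zero =>
      have h1 : deriv (fun z : ℂ => z ^ 0) = fun _ : ℂ => (0 : ℂ) := by
        funext w; simp
      rw [h1]
      have h2 : iteratedDeriv k (fun _ : ℂ => (0 : ℂ)) = fun _ : ℂ => (0 : ℂ) := by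
        rw [iteratedDeriv_eq_iterate]
        exact Function.iterate_fixed (by funext w; simp) k
      rw [h2]
      simp [Nat.descFactorial]
    | succ σ =>
      have h1 : deriv (fun z : ℂ => z ^ (σ + 1)) = fun z : ℂ => ((σ + 1 : ℕ) : ℂ) * z ^ σ := by
        funext w
        rw [deriv_pow_field, Nat.add_sub_cancel]
      rw [h1]
      have h2 : (fun z : ℂ => ((σ + 1 : ℕ) : ℂ) * z ^ σ)
          = ((σ + 1 : ℕ) : ℂ) • (fun z : ℂ => z ^ σ) := by
        funext w; simp [smul_eq_mul]
      rw [h2]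
      have h3 : iteratedDeriv k (((σ + 1 : ℕ) : ℂ) • (fun z : ℂ => z ^ σ)) z
          = ((σ + 1 : ℕ) : ℂ) • iteratedDeriv k (fun z : ℂ => z ^ σ) z := by
        rw [iteratedDeriv_eq_iteratedFDeriv, iteratedDeriv_eq_iteratedFDeriv,
          iteratedFDeriv_const_smul_apply (by exact contDiff_id.pow σ : ContDiff ℂ (k:ℕ∞) fun z : ℂ => z ^ σ).contDiffAt]
        rfl
      rw [h3, ih σ z, Nat.succ_descFactorial_succ, Nat.succ_sub_succ]
      simp only [smul_eq_mul]
      push_cast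
      ring

lemma iterDeriv_monomial_zero {k σ : ℕ} (h : k ≠ σ) :
    iteratedDeriv k (fun z : ℂ => z ^ σ) 0 = 0 := by
  rw [iterDeriv_monomial]
  rcases lt_or_gt_of_ne h with h | h
  · rw [zero_pow (Nat.sub_ne_zero_of_lt h), mul_zero]
  · rw [Nat.descFactorial_eq_zero_iff_lt.mpr h]; simp

/-- On an open set where `f` is `ℂ`-differentiable, the real iterated derivative is the
restriction of scalars of the complex one. -/
lemma iteratedFDeriv_real_of_holo {f : ℂ → ℂ} {B : Set ℂ} (hB : IsOpen B) {x : ℂ} (hx : x ∈ B)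
    (hf : DifferentiableOn ℂ f B) (n : ℕ) :
    iteratedFDeriv ℝ n f x = (iteratedFDeriv ℂ n f x).restrictScalars ℝ := by
  have hcd : ContDiffOn ℂ (n : ℕ∞) f B :=
    (hf.analyticOnNhd hB).contDiffOn hB.uniqueDiffOn
  have ht : HasFTaylorSeriesUpToOn (n : ℕ∞) f (ftaylorSeriesWithin ℂ f B) B :=
    hcd.ftaylorSeriesWithin hB.uniqueDiffOn
  have htr := HasFTaylorSeriesUpToOn.restrictScalars ℝ ht
  have h1 := htr.eq_iteratedFDerivWithin_of_uniqueDiffOn (m := n) le_rfl hB.uniqueDiffOn hx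
  have h2 := ht.eq_iteratedFDerivWithin_of_uniqueDiffOn (m := n) le_rfl hB.uniqueDiffOn hx
  rw [← iteratedFDerivWithin_of_isOpen (𝕜 := ℝ) n hB hx,
    ← iteratedFDerivWithin_of_isOpen (𝕜 := ℂ) n hB hx, ← h1, ← h2]
  rfl

lemma iteratedFDeriv_pow_zero {k σ : ℕ} (h : k ≠ σ) :
    iteratedFDeriv ℝ k (fun z : ℂ => z ^ σ) 0 = 0 := by
  rw [iteratedFDeriv_real_of_holo isOpen_univ (mem_univ 0)
    ((differentiable_pow σ).differentiableOn) k]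
  have hz : iteratedFDeriv ℂ k (fun z : ℂ => z ^ σ) 0 = 0 := by
    have h1 := ContinuousMultilinearMap.mkPiRing_apply_one_eq_self
      (iteratedFDeriv ℂ k (fun z : ℂ => z ^ σ) 0)
    rw [← h1, ← iteratedDeriv_eq_iteratedFDeriv, iterDeriv_monomial_zero h]
    ext v
    simp
  rw [hz]
  ext v
  simp

lemma iteratedFDeriv_pair_zero (s r k : ℕ) (hks : k ≠ s) (hkr : k ≠ r) :
    iteratedFDeriv ℝ k (fun τ : ℂ => ((τ ^ s, τ ^ r) : ℂ × ℂ)) 0 = 0 := by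
  have hc1 : ContDiff ℝ (k : ℕ∞) fun τ : ℂ => τ ^ s :=
    ((contDiff_id.pow s : ContDiff ℂ (k : ℕ∞) fun τ : ℂ => τ ^ s).restrict_scalars ℝ)
  have hc2 : ContDiff ℝ (k : ℕ∞) fun τ : ℂ => τ ^ r :=
    ((contDiff_id.pow r : ContDiff ℂ (k : ℕ∞) fun τ : ℂ => τ ^ r).restrict_scalars ℝ)
  have hfl : (fun τ : ℂ => ((τ ^ s, τ ^ r) : ℂ × ℂ))
      = (fun τ : ℂ => (ContinuousLinearMap.inl ℝ ℂ ℂ) (τ ^ s))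
        + (fun τ : ℂ => (ContinuousLinearMap.inr ℝ ℂ ℂ) (τ ^ r)) := by
    funext τ
    simp [Prod.ext_iff]
  have hcA : ContDiff ℝ (k : ℕ∞) fun τ : ℂ => (ContinuousLinearMap.inl ℝ ℂ ℂ) (τ ^ s) :=
    (ContinuousLinearMap.inl ℝ ℂ ℂ).contDiff.comp hc1
  have hcB : ContDiff ℝ (k : ℕ∞) fun τ : ℂ => (ContinuousLinearMap.inr ℝ ℂ ℂ) (τ ^ r) :=
    (ContinuousLinearMap.inr ℝ ℂ ℂ).contDiff.comp hc2
  rw [hfl, iteratedFDeriv_add_apply hcA.contDiffAt hcB.contDiffAt]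
  have hzero : ∀ (g : ℂ →L[ℝ] ℂ × ℂ),
      g.compContinuousMultilinearMap (0 : ContinuousMultilinearMap ℝ (fun _ : Fin k => ℂ) ℂ) = 0 := by
    intro g
    refine ContinuousMultilinearMap.ext fun v => ?_
    have hv : (g.compContinuousMultilinearMap
        (0 : ContinuousMultilinearMap ℝ (fun _ : Fin k => ℂ) ℂ)) v
        = g ((0 : ContinuousMultilinearMap ℝ (fun _ : Fin k => ℂ) ℂ) v) := rfl
    rw [hv]
    simp
  have e1 : iteratedFDeriv ℝ k (fun τ : ℂ => (ContinuousLinearMap.inl ℝ ℂ ℂ) (τ ^ s)) 0 = 0 := by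
    have hcomp := (ContinuousLinearMap.inl ℝ ℂ ℂ).iteratedFDeriv_comp_left (hc1.contDiffAt (x := (0 : ℂ)))
      (by exact_mod_cast le_refl (k : ℕ∞))
    rw [show (fun τ : ℂ => (ContinuousLinearMap.inl ℝ ℂ ℂ) (τ ^ s))
        = (⇑(ContinuousLinearMap.inl ℝ ℂ ℂ) ∘ fun τ : ℂ => τ ^ s) from rfl, hcomp,
      iteratedFDeriv_pow_zero hks]
    exact hzero _
  have e2 : iteratedFDeriv ℝ k (fun τ : ℂ => (ContinuousLinearMap.inr ℝ ℂ ℂ) (τ ^ r)) 0 = 0 := by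
    have hcomp := (ContinuousLinearMap.inr ℝ ℂ ℂ).iteratedFDeriv_comp_left (hc2.contDiffAt (x := (0 : ℂ)))
      (by exact_mod_cast le_refl (k : ℕ∞))
    rw [show (fun τ : ℂ => (ContinuousLinearMap.inr ℝ ℂ ℂ) (τ ^ r))
        = (⇑(ContinuousLinearMap.inr ℝ ℂ ℂ) ∘ fun τ : ℂ => τ ^ r) from rfl, hcomp,
      iteratedFDeriv_pow_zero hkr]
    exact hzero _
  rw [e1, e2]
  simp

lemma myOFP_sum_partSize {n : ℕ} (c : OrderedFinpartition n) :
    ∑ i, c.partSize i = n := by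
  classical
  have hbij : Function.Bijective
      (fun p : Σ m : Fin c.length, Fin (c.partSize m) => c.emb p.1 p.2) := by
    refine ⟨c.emb_injective, fun x => ?_⟩
    obtain ⟨m, j, hj⟩ := c.cover x
    exact ⟨⟨m, j⟩, hj⟩
  have hc := Fintype.card_of_bijective hbij
  simpa [Fintype.card_sigma] using hc

lemma myRep_of_parts {r s n : ℕ} (c : OrderedFinpartition n)
    (h : ∀ i, c.partSize i = r ∨ c.partSize i = s) : ∃ a b : ℕ, n = a * s + b * r := by
  classical
  refine ⟨(Finset.univ.filter fun i => c.partSize i = s).card,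
    (Finset.univ.filter fun i => ¬ c.partSize i = s).card, ?_⟩
  have h1 := myOFP_sum_partSize c
  have e1 : ∑ i ∈ Finset.univ.filter (fun i => c.partSize i = s), c.partSize i
      = (Finset.univ.filter fun i => c.partSize i = s).card * s := by
    rw [Finset.sum_congr rfl (fun i hi => (Finset.mem_filter.mp hi).2), Finset.sum_const,
      smul_eq_mul]
  have e2 : ∑ i ∈ Finset.univ.filter (fun i => ¬ c.partSize i = s), c.partSize i
      = (Finset.univ.filter fun i => ¬ c.partSize i = s).card * r := by
    have : ∀ i ∈ Finset.univ.filter (fun i => ¬ c.partSize i = s), c.partSize i = r := by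
      intro i hi
      rcases h i with hh | hh
      · exact hh
      · exact absurd hh (Finset.mem_filter.mp hi).2
    rw [Finset.sum_congr rfl this, Finset.sum_const, smul_eq_mul]
  conv_lhs => rw [← h1]
  rw [← Finset.sum_filter_add_sum_filter_not Finset.univ (fun i => c.partSize i = s), e1, e2]

lemma myRep_of_large {r s : ℕ} (hr : 2 ≤ r) (hrs : r < s) (hcop : Nat.Coprime r s)
    {n : ℕ} (hn : r * s ≤ n) : ∃ a b : ℕ, n = a * s + b * r := by
  have hF := frobeniusNumber_pair hcop (by omega) (by omega)
  by_contra hrep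
  push_neg at hrep
  have hn' : n ∉ AddSubmonoid.closure ({r, s} : Set ℕ) := by
    intro hmem
    rw [AddSubmonoid.mem_closure_pair] at hmem
    obtain ⟨a, b, hab⟩ := hmem
    have hab' : a * r + b * s = n := by simpa [smul_eq_mul] using hab
    exact hrep b a (by omega)
  have hle : n ≤ r * s - r - s := hF.2 hn'
  have h2 : r * s - r - s < r * s :=
    lt_of_le_of_lt (Nat.sub_le _ s) (Nat.sub_lt (Nat.mul_pos (by omega) (by omega)) (by omega))
  omega

lemma myRep_bound {r s n : ℕ} (hs : 0 < s) (h : ∃ a b : ℕ, n = a * s + b * r) :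
    ∃ a b : ℕ, b < s ∧ n = a * s + b * r := by
  obtain ⟨a, b, rfl⟩ := h
  refine ⟨a + b / s * r, b % s, Nat.mod_lt _ hs, ?_⟩
  have hd : b / s * s + b % s = b := by rw [mul_comm]; exact Nat.div_add_mod b s
  have he : (a + b / s * r) * s + b % s * r = a * s + (b / s * s + b % s) * r := by ring
  rw [he, hd]

lemma myInj {r s : ℕ} (hs0 : 0 < s) (hcop : Nat.Coprime r s) :
    Function.Injective (fun p : Fin s × ℕ => p.2 * s + (p.1 : ℕ) * r) := by
  rintro ⟨b₁, a₁⟩ ⟨b₂, a₂⟩ h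
  simp only at h
  have hmod : (b₁ : ℕ) * r % s = (b₂ : ℕ) * r % s := by
    have h1 : ((b₁ : ℕ) * r + a₁ * s) % s = ((b₂ : ℕ) * r + a₂ * s) % s := by
      rw [show (b₁ : ℕ) * r + a₁ * s = a₁ * s + (b₁ : ℕ) * r by ring,
        show (b₂ : ℕ) * r + a₂ * s = a₂ * s + (b₂ : ℕ) * r by ring, h]
    simpa [Nat.add_mul_mod_self_right] using h1
  have hb : (b₁ : ℕ) = (b₂ : ℕ) := by
    have hmeq : (b₁ : ℕ) * r ≡ (b₂ : ℕ) * r [MOD s] := hmod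
    have := (Nat.ModEq.cancel_right_of_coprime (by simpa [Nat.Coprime] using hcop.symm) hmeq)
    have hb1 : (b₁ : ℕ) % s = (b₂ : ℕ) % s := this
    rwa [Nat.mod_eq_of_lt b₁.isLt, Nat.mod_eq_of_lt b₂.isLt] at hb1
  have ha : a₁ = a₂ := by
    rw [hb] at h
    have h' : a₁ * s = a₂ * s := by omega
    exact Nat.eq_of_mul_eq_mul_right hs0 h'
  ext <;> simp [hb, ha]

/-- For coprime integers `2 ≤ r < s` there is `L ∈ ℕ`, depending only on `r`
and `s`, such that: if `Φ : ℂ² → ℂ` is `C^{L+1}` on a neighborhood of `0` and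
`τ ↦ Φ(τ^s, τ^r)` is holomorphic on some punctured disc, then there is a function `F`
holomorphic on a neighborhood `U` of `0 ∈ ℂ²` with `F(τ^s, τ^r) = Φ(τ^s, τ^r)` for all
sufficiently small `τ`. -/
theorem stmt5 (r s : ℕ) (hr : 2 ≤ r) (hrs : r < s) (hcop : Nat.Coprime r s) :
    ∃ L : ℕ, ∀ Φ : ℂ × ℂ → ℂ, ∀ V : Set (ℂ × ℂ),
      IsOpen V → (0 : ℂ × ℂ) ∈ V → ContDiffOn ℝ ((L + 1 : ℕ) : ℕ∞) Φ V →
      (∃ ρ : ℝ, 0 < ρ ∧ DifferentiableOn ℂ (fun τ : ℂ => Φ (τ ^ s, τ ^ r))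
        {τ : ℂ | 0 < ‖τ‖ ∧ ‖τ‖ < ρ}) →
      ∃ U : Set (ℂ × ℂ), IsOpen U ∧ (0 : ℂ × ℂ) ∈ U ∧
        ∃ F : ℂ × ℂ → ℂ, DifferentiableOn ℂ F U ∧
          ∃ δ : ℝ, 0 < δ ∧
            ∀ τ : ℂ, ‖τ‖ < δ → F (τ ^ s, τ ^ r) = Φ (τ ^ s, τ ^ r) := by
  classical
  have hs0 : 0 < s := by omega
  have hr0 : 0 < r := by omega
  refine ⟨r * s, ?_⟩
  rintro Φ V hV h0V hΦ ⟨ρ, hρ, hdiff⟩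
  set g : ℂ → ℂ := fun τ : ℂ => Φ (τ ^ s, τ ^ r) with hgdef
  have hpm : Continuous fun τ : ℂ => ((τ ^ s, τ ^ r) : ℂ × ℂ) :=
    (continuous_pow s).prodMk (continuous_pow r)
  have hpm0 : (((0:ℂ) ^ s, (0:ℂ) ^ r) : ℂ × ℂ) = (0 : ℂ × ℂ) := by
    simp [zero_pow hs0.ne', zero_pow hr0.ne', Prod.ext_iff]
  -- continuity of g at 0
  have hgc : ContinuousAt g 0 := by
    have h1 : ContinuousAt Φ (((0:ℂ) ^ s, (0:ℂ) ^ r) : ℂ × ℂ) := by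
      rw [hpm0]; exact hΦ.continuousOn.continuousAt (hV.mem_nhds h0V)
    exact ContinuousAt.comp (g := Φ) (f := fun τ : ℂ => ((τ ^ s, τ ^ r) : ℂ × ℂ)) (x := 0)
      h1 hpm.continuousAt
  -- g is analytic at 0 by the removable singularity theorem
  have hO : IsOpen {τ : ℂ | 0 < ‖τ‖ ∧ ‖τ‖ < ρ} := by
    have he : {τ : ℂ | 0 < ‖τ‖ ∧ ‖τ‖ < ρ}
        = {τ : ℂ | 0 < ‖τ‖} ∩ {τ : ℂ | ‖τ‖ < ρ} := rfl
    rw [he]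
    exact (isOpen_lt continuous_const continuous_norm).inter
      (isOpen_lt continuous_norm continuous_const)
  have hev : ∀ᶠ z in nhdsWithin (0:ℂ) {(0:ℂ)}ᶜ, DifferentiableAt ℂ g z := by
    have h1 : ∀ᶠ z in nhds (0:ℂ), ‖z‖ < ρ := by
      filter_upwards [Metric.ball_mem_nhds (0:ℂ) hρ] with z hz
      rw [mem_ball_zero_iff] at hz
      simpa using hz
    filter_upwards [h1.filter_mono nhdsWithin_le_nhds, eventually_mem_nhdsWithin]
      with z hz1 hz2
    exact hdiff.differentiableAt (hO.mem_nhds ⟨norm_pos_iff.mpr hz2, hz1⟩)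
  obtain ⟨P, R, hPb⟩ : ∃ P R, HasFPowerSeriesOnBall g P 0 R := by
    obtain ⟨P, hPat⟩ :=
      Complex.analyticAt_of_differentiable_on_punctured_nhds_of_continuousAt hev hgc
    obtain ⟨R, hPb⟩ := hPat
    exact ⟨P, R, hPb⟩
  -- the Taylor series of Φ and of the parametrization, composed by Faà di Bruno
  have hcast : ∀ {a b : ℕ}, a ≤ b → ((a : ℕ) : WithTop ℕ∞) ≤ ((b : ℕ) : ℕ∞) := by
    intro a b h
    exact_mod_cast h
  set W : Set ℂ := (fun τ : ℂ => ((τ ^ s, τ ^ r) : ℂ × ℂ)) ⁻¹' V with hWdef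
  have hWopen : IsOpen W := hV.preimage hpm
  have h0W : (0:ℂ) ∈ W := by
    show (((0:ℂ) ^ s, (0:ℂ) ^ r) : ℂ × ℂ) ∈ V
    rw [hpm0]; exact h0V
  have hΦT : HasFTaylorSeriesUpToOn (((r * s + 1 : ℕ) : ℕ∞)) Φ
      (ftaylorSeriesWithin ℝ Φ V) V := hΦ.ftaylorSeriesWithin hV.uniqueDiffOn
  have hpmT : HasFTaylorSeriesUpToOn (((r * s + 1 : ℕ) : ℕ∞))
      (fun τ : ℂ => ((τ ^ s, τ ^ r) : ℂ × ℂ))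
      (ftaylorSeriesWithin ℝ (fun τ : ℂ => ((τ ^ s, τ ^ r) : ℂ × ℂ)) W) W := by
    have hcd : ContDiff ℝ (((r * s + 1 : ℕ) : ℕ∞)) (fun τ : ℂ => ((τ ^ s, τ ^ r) : ℂ × ℂ)) :=
      ContDiff.prodMk ((contDiff_id.pow s :
          ContDiff ℂ (((r * s + 1 : ℕ) : ℕ∞)) fun τ : ℂ => τ ^ s).restrict_scalars ℝ)
        ((contDiff_id.pow r :
          ContDiff ℂ (((r * s + 1 : ℕ) : ℕ∞)) fun τ : ℂ => τ ^ r).restrict_scalars ℝ)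
    exact hcd.contDiffOn.ftaylorSeriesWithin hWopen.uniqueDiffOn
  have hcomp := hΦT.comp hpmT (fun x hx => hx)
  have hkey : ∀ n : ℕ, n ≤ r * s + 1 → (¬ ∃ a b : ℕ, n = a * s + b * r) →
      iteratedFDerivWithin ℝ n (Φ ∘ fun τ : ℂ => ((τ ^ s, τ ^ r) : ℂ × ℂ)) W 0 = 0 := by
    intro n hnm hbad
    rw [← hcomp.eq_iteratedFDerivWithin_of_uniqueDiffOn (m := n) (hcast hnm)
      hWopen.uniqueDiffOn h0W]
    apply Finset.sum_eq_zero
    intro c _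
    have hex : ∃ i : Fin c.length, ¬(c.partSize i = r ∨ c.partSize i = s) := by
      by_contra hcon
      push_neg at hcon
      exact hbad (myRep_of_parts c hcon)
    obtain ⟨i, hi⟩ := hex
    push_neg at hi
    have hz : ftaylorSeriesWithin ℝ (fun τ : ℂ => ((τ ^ s, τ ^ r) : ℂ × ℂ)) W 0
        (c.partSize i) = 0 := by
      show iteratedFDerivWithin ℝ (c.partSize i) _ W 0 = 0
      rw [iteratedFDerivWithin_of_isOpen _ hWopen h0W]
      exact iteratedFDeriv_pair_zero s r _ hi.2 hi.1
    refine ContinuousMultilinearMap.ext fun v => ?_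
    rw [FormalMultilinearSeries.compAlongOrderedFinpartition_apply,
      ContinuousMultilinearMap.zero_apply]
    apply ContinuousMultilinearMap.map_coord_zero _ i
    rw [OrderedFinpartition.applyOrderedFinpartition_apply]
    show (ftaylorSeriesWithin ℝ (fun τ : ℂ => ((τ ^ s, τ ^ r) : ℂ × ℂ)) W 0
      (c.partSize i)) (v ∘ c.emb i) = 0
    rw [hz]
    rfl
  -- vanishing of non-representable coefficients
  have hvanish : ∀ n : ℕ, (¬ ∃ a b : ℕ, n = a * s + b * r) → P.coeff n = 0 := by
    intro n hbad
    have hnm : n ≤ r * s + 1 := by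
      by_contra hcon
      exact hbad (myRep_of_large hr hrs hcop (by omega))
    have hiR : iteratedFDeriv ℝ n g 0 = 0 := by
      rw [← iteratedFDerivWithin_of_isOpen (𝕜 := ℝ) n hWopen h0W]
      exact hkey n hnm hbad
    have hBopen : IsOpen (EMetric.ball (0:ℂ) R) := EMetric.isOpen_ball
    have h0B : (0:ℂ) ∈ EMetric.ball (0:ℂ) R := EMetric.mem_ball_self hPb.r_pos
    have hgd : DifferentiableOn ℂ g (EMetric.ball (0:ℂ) R) :=
      hPb.analyticOnNhd.differentiableOn
    have hres := iteratedFDeriv_real_of_holo hBopen h0B hgd n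
    have hCz : (iteratedFDeriv ℂ n g 0) (fun _ => (1:ℂ)) = 0 := by
      have h0 : (iteratedFDeriv ℂ n g 0).restrictScalars ℝ = 0 := by rw [← hres, hiR]
      calc (iteratedFDeriv ℂ n g 0) (fun _ => (1:ℂ))
          = ((iteratedFDeriv ℂ n g 0).restrictScalars ℝ) (fun _ => (1:ℂ)) := rfl
        _ = 0 := by rw [h0]; rfl
    have hfs := HasFPowerSeriesOnBall.factorial_smul hPb (1:ℂ) n
    rw [hCz] at hfs
    rw [nsmul_eq_mul] at hfs
    have hne : ((n.factorial : ℕ) : ℂ) ≠ 0 := Nat.cast_ne_zero.mpr (Nat.factorial_ne_zero n)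
    have hP1 : (P n) (fun _ => (1:ℂ)) = 0 := by
      rcases mul_eq_zero.mp hfs with h | h
      · exact absurd h hne
      · exact h
    have hco : P.coeff n = (P n) fun _ => (1:ℂ) := rfl
    rw [hco, hP1]
  -- Phase 2: construction of F
  obtain ⟨t', h0t, htR⟩ := ENNReal.lt_iff_exists_nnreal_btwn.mp hPb.r_pos
  have htrad : (t' : ℝ≥0∞) < P.radius := lt_of_lt_of_le htR hPb.r_le
  have hsumP : Summable fun n : ℕ => ‖P n‖ * (t' : ℝ) ^ n := P.summable_norm_mul_pow htrad
  set t : ℝ := (t' : ℝ) with htdef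
  have ht0 : 0 < t := by exact_mod_cast h0t
  have hcoefb : ∀ n : ℕ, ‖P.coeff n‖ ≤ ‖P n‖ := by
    intro n
    have h1 := (P n).le_opNorm (fun _ => (1:ℂ))
    simpa using h1
  have hinja : ∀ b : ℕ, Function.Injective fun a : ℕ => a * s + b * r := by
    intro b a₁ a₂ h
    simp only at h
    have h' : a₁ * s = a₂ * s := by omega
    exact Nat.eq_of_mul_eq_mul_right hs0 h'
  set G : ℕ → ℂ → ℂ := fun b z => ∑' a : ℕ, P.coeff (a * s + b * r) * z ^ a with hGdef
  have hMb : ∀ b : ℕ,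
      Summable fun a : ℕ => ‖P (a * s + b * r)‖ * t ^ (a * s + b * r) / t ^ (b * r) := by
    intro b
    exact (hsumP.comp_injective (hinja b)).div_const _
  have hGdiff : ∀ b : ℕ, DifferentiableOn ℂ (G b) (Metric.ball 0 (t ^ s)) := by
    intro b
    have hb : ∀ (a : ℕ), ∀ z ∈ Metric.ball (0:ℂ) (t ^ s),
        ‖P.coeff (a * s + b * r) * z ^ a‖
          ≤ ‖P (a * s + b * r)‖ * t ^ (a * s + b * r) / t ^ (b * r) := by
      intro a z hz
      rw [mem_ball_zero_iff] at hz
      have h1 : ‖P.coeff (a * s + b * r) * z ^ a‖ ≤ ‖P (a * s + b * r)‖ * (t ^ s) ^ a := by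
        rw [norm_mul, norm_pow]
        exact mul_le_mul (hcoefb _) (pow_le_pow_left₀ (norm_nonneg z) hz.le a)
          (by positivity) (norm_nonneg _)
      refine h1.trans ?_
      have h2 : (t ^ s) ^ a = t ^ (a * s) := by rw [← pow_mul, mul_comm]
      have h3 : t ^ (a * s) = t ^ (a * s + b * r) / t ^ (b * r) := by
        rw [pow_add]
        field_simp
      rw [h2, h3, mul_div_assoc]
    have hlim := tendstoUniformlyOn_tsum (hMb b) hb
    exact hlim.tendstoLocallyUniformlyOn.differentiableOn
      (Filter.Eventually.of_forall (fun T => DifferentiableOn.fun_sum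
        (fun a _ => ((differentiable_const _).mul (differentiable_pow a)).differentiableOn)))
      Metric.isOpen_ball
  set F : ℂ × ℂ → ℂ := fun ζ => ∑ b ∈ Finset.range s, ζ.2 ^ b * G b ζ.1 with hFdef
  refine ⟨Metric.ball 0 (t ^ s) ×ˢ (univ : Set ℂ), Metric.isOpen_ball.prod isOpen_univ,
    ⟨Metric.mem_ball_self (by positivity), mem_univ _⟩, F, ?_, t, ht0, ?_⟩
  · apply DifferentiableOn.fun_sum
    intro b _
    refine DifferentiableOn.mul ?_ ?_
    · exact (differentiable_snd.pow b).differentiableOn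
    · exact ((hGdiff b).comp differentiable_fst.differentiableOn) (fun ζ hζ => hζ.1)
  · intro τ hτ
    have hτn : ‖τ‖ < t := by exact hτ
    have hτball : τ ∈ EMetric.ball (0:ℂ) R := by
      have h1 : ‖τ‖₊ < t' := by
        rw [← NNReal.coe_lt_coe]
        simpa [coe_nnnorm] using hτn
      exact mem_emetric_ball_zero_iff.mpr (lt_trans (ENNReal.coe_lt_coe.mpr h1) htR)
    have hhs : HasSum (fun n : ℕ => P.coeff n * τ ^ n) (g τ) := by
      have h1 := hPb.hasSum hτball
      rw [zero_add] at h1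
      have h2 : ∀ n : ℕ, ((P n) fun _ => τ) = P.coeff n * τ ^ n := by
        intro n
        rw [FormalMultilinearSeries.apply_eq_pow_smul_coeff, smul_eq_mul, mul_comm]
      simpa [h2] using h1
    have hfnorm : Summable fun n : ℕ => ‖P.coeff n * τ ^ n‖ := by
      refine Summable.of_nonneg_of_le (fun n => norm_nonneg _) (fun n => ?_) hsumP
      rw [norm_mul, norm_pow]
      exact mul_le_mul (hcoefb n) (pow_le_pow_left₀ (norm_nonneg τ) hτn.le n) (by positivity)
        (norm_nonneg _)
    set f : ℕ → ℂ := fun n => P.coeff n * τ ^ n with hfdef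
    have hFsum : Summable fun p : Fin s × ℕ => f (p.2 * s + (p.1 : ℕ) * r) :=
      Summable.of_norm (hfnorm.comp_injective (myInj hs0 hcop))
    have hsupp : Function.support f
        ⊆ Set.range fun p : Fin s × ℕ => p.2 * s + (p.1 : ℕ) * r := by
      intro n hn
      have hcoef : P.coeff n ≠ 0 := by
        intro h0
        apply hn
        simp [hfdef, h0]
      have hrepn : ∃ a b : ℕ, n = a * s + b * r := by
        by_contra hbad
        exact hcoef (hvanish n hbad)
      obtain ⟨a, b, hb, heq⟩ := myRep_bound hs0 hrepn
      exact ⟨(⟨b, hb⟩, a), heq.symm⟩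
    have htsum1 : ∑' p : Fin s × ℕ, f (p.2 * s + (p.1 : ℕ) * r) = ∑' n, f n :=
      (myInj hs0 hcop).tsum_eq hsupp
    have hfib : ∀ b : Fin s, Summable fun a : ℕ => f (a * s + (b : ℕ) * r) :=
      fun b => Summable.of_norm (hfnorm.comp_injective (hinja (b : ℕ)))
    have htsum2 : ∑' p : Fin s × ℕ, f (p.2 * s + (p.1 : ℕ) * r)
        = ∑ b : Fin s, ∑' a : ℕ, f (a * s + (b : ℕ) * r) := by
      rw [Summable.tsum_prod' hFsum hfib]
      exact tsum_fintype _
    have hGb : ∀ b : ℕ, (τ ^ r) ^ b * G b (τ ^ s) = ∑' a : ℕ, f (a * s + b * r) := by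
      intro b
      simp only [hGdef]
      rw [← tsum_mul_left]
      apply tsum_congr
      intro a
      simp only [hfdef]
      rw [show a * s + b * r = s * a + r * b by ring, pow_add, pow_mul, pow_mul]
      ring
    calc F (τ ^ s, τ ^ r) = ∑ b ∈ Finset.range s, (τ ^ r) ^ b * G b (τ ^ s) := rfl
      _ = ∑ b ∈ Finset.range s, ∑' a : ℕ, f (a * s + b * r) :=
          Finset.sum_congr rfl (fun b _ => hGb b)
      _ = ∑ b : Fin s, ∑' a : ℕ, f (a * s + (b : ℕ) * r) :=
          (Fin.sum_univ_eq_sum_range (fun b => ∑' a : ℕ, f (a * s + b * r)) s).symm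
      _ = ∑' n, f n := by rw [← htsum2, htsum1]
      _ = g τ := hhs.tsum_eq
      _ = Φ (τ ^ s, τ ^ r) := rfl
end
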